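/- arXiv:1507.08841 — 6 statements merged into one kernel-verified Lean document; each statement's English description precedes it below -/
import Mathlib

section
/- Let Γ be a group acting on a set X. If Y_1,…,Y_n are subsets of X none of which is Γ-finite (i.e., each has infinite orbit under the induced action of Γ on subsets), then there exists g ∈ Γ such that g·Y_i ≠ Y_j for all 1 ≤ i, j ≤ n. -/
open scoped Pointwise

/-- If `Γ` acts on `X` and `Y₁, …, Yₙ` are subsets of `X` none of which has finite orbit
under the induced action of `Γ` on subsets, then there is `g ∈ Γ` with `g • Yᵢ ≠ Yⱼ`
for all `i, j`. -/
theorem exists_translate_ne {Γ X : Type*} [Group Γ] [MulAction Γ X] {n : ℕ}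
    (Y : Fin n → Set X)
    (hY : ∀ i, (Set.range fun g : Γ => g • Y i).Infinite) :
    ∃ g : Γ, ∀ i j, g • Y i ≠ Y j := by
  classical
  by_contra h
  push_neg at h
  -- For each pair (i, j), a coset representative if one exists
  set H : Fin n × Fin n → Subgroup Γ := fun p => MulAction.stabilizer Γ (Y p.1) with hH
  set g : Fin n × Fin n → Γ := fun p =>
    if hp : ∃ g : Γ, g • Y p.1 = Y p.2 then hp.choose else 1 with hg
  have hcovers : ⋃ p ∈ (Finset.univ : Finset (Fin n × Fin n)),
      (g p) • (H p : Set Γ) = Set.univ := by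
    apply Set.eq_univ_of_forall
    intro x
    obtain ⟨i, j, hij⟩ := h x
    refine Set.mem_iUnion₂.mpr ⟨(i, j), Finset.mem_univ _, ?_⟩
    have hex : ∃ g : Γ, g • Y i = Y j := ⟨x, hij⟩
    have hge : g (i, j) • Y i = Y j := by
      simp only [hg, dif_pos hex]
      exact hex.choose_spec
    rw [mem_leftCoset_iff]
    show (g (i, j))⁻¹ * x ∈ MulAction.stabilizer Γ (Y i)
    rw [MulAction.mem_stabilizer_iff, mul_smul, hij, ← hge, inv_smul_smul]
  obtain ⟨p, -, hfin⟩ := Subgroup.exists_finiteIndex_of_leftCoset_cover hcovers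
  have : Finite (Γ ⧸ MulAction.stabilizer Γ (Y p.1)) := by
    have := hfin
    exact Subgroup.finite_quotient_of_finiteIndex
  have hfinorb : (MulAction.orbit Γ (Y p.1)).Finite := by
    have : Finite (MulAction.orbit Γ (Y p.1)) :=
      Finite.of_equiv _ (MulAction.orbitEquivQuotientStabilizer Γ (Y p.1)).symm
    exact Set.toFinite _
  exact hY p.1 hfinorb
end

section
/- Let X be a Noetherian topological space and Γ a group acting on X by homeomorphisms. Let f be a function from the set of closed subsets of X to [0,1] satisfying: (I) if Z ⊆ Y are closed subsets of X then f(Z) ≤ f(Y); and (II) for all closed Y ⊆ X and all g ∈ Γ with f(Y ∩ g·Y) = 0, one has f(Y ∪ g·Y) ≥ 2·f(Y). If a closed subset Y ⊆ X Γ-covers some closed subset W ⊆ X with f(W) > 0, then Y Γ-covers some closed Γ-stable subset Z ⊆ X with f(Z) > 0. -/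
open scoped Pointwise

/-- `Z` is `Γ`-covered by `Y` if `Z` is closed and contained in a finite union of
`Γ`-translates of `Y`. -/
def GammaCovers (Γ : Type*) {X : Type*} [Group Γ] [MulAction Γ X] [TopologicalSpace X]
    (Y Z : Set X) : Prop :=
  IsClosed Z ∧ ∃ s : Finset Γ, Z ⊆ ⋃ g ∈ s, g • Y

set_option linter.unusedSectionVars false

namespace GammaCoversAux

open TopologicalSpace Set MulAction

variable {Γ X : Type*} [Group Γ] [MulAction Γ X] [TopologicalSpace X]
  [TopologicalSpace.NoetherianSpace X] [ContinuousConstSMul Γ X]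

/-- The rank of (the closure of) a set in the well-founded order of closed subsets. -/
noncomputable def plainRank (A : Set X) : Ordinal :=
  IsWellFounded.rank ((· < ·) : Closeds X → Closeds X → Prop) ⟨closure A, isClosed_closure⟩

lemma plainRank_lt {A D : Set X} (hA : IsClosed A) (hD : IsClosed D) (h : A ⊂ D) :
    plainRank A < plainRank D := by
  apply IsWellFounded.rank_lt_of_rel
  rw [← SetLike.coe_ssubset_coe]
  show closure A ⊂ closure D
  rwa [hA.closure_eq, hD.closure_eq]

variable (Γ) in
/-- Translation-invariant rank. -/
noncomputable def rnk (A : Set X) : Ordinal :=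
  sInf {o : Ordinal | ∃ h : Γ, o = plainRank (h • A)}

lemma rnk_lt_of_ssubset_smul {P C : Set X} (hP : IsClosed P) (hC : IsClosed C) {a : Γ}
    (h : P ⊂ a • C) : rnk Γ P < rnk Γ C := by
  have hne : {o : Ordinal | ∃ h : Γ, o = plainRank (h • C)}.Nonempty := ⟨_, 1, rfl⟩
  have hmem : rnk Γ C ∈ {o : Ordinal | ∃ h : Γ, o = plainRank (h • C)} := csInf_mem hne
  obtain ⟨h₀, hh₀⟩ := hmem
  have h2 : (h₀ * a⁻¹) • (a • C) = h₀ • C := by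
    rw [← mul_smul, inv_mul_cancel_right]
  have key : (h₀ * a⁻¹) • P ⊂ h₀ • C := by
    refine Set.ssubset_iff_subset_ne.mpr ⟨h2 ▸ Set.smul_set_mono h.subset, fun hcon => h.ne ?_⟩
    have e1 : (h₀ * a⁻¹)⁻¹ • ((h₀ * a⁻¹) • P) = P := inv_smul_smul _ _
    have e2 : (h₀ * a⁻¹)⁻¹ • (h₀ • C) = a • C := by
      rw [← mul_smul]
      congr 1
      group
    rw [← e1, hcon, e2]
  calc rnk Γ P ≤ plainRank ((h₀ * a⁻¹) • P) := csInf_le' ⟨h₀ * a⁻¹, rfl⟩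
    _ < plainRank (h₀ • C) := plainRank_lt (hP.smul _) (hC.smul _) key
    _ = rnk Γ C := hh₀.symm

variable {Y : Set X}

lemma gc_empty : GammaCovers Γ Y (∅ : Set X) :=
  ⟨isClosed_empty, ∅, by simp⟩

lemma gc_subset {A B : Set X} (hA : GammaCovers Γ Y A) (hB : IsClosed B) (h : B ⊆ A) :
    GammaCovers Γ Y B := by
  obtain ⟨_, s, hs⟩ := hA
  exact ⟨hB, s, h.trans hs⟩

lemma gc_union {A B : Set X} (hA : GammaCovers Γ Y A) (hB : GammaCovers Γ Y B) :
    GammaCovers Γ Y (A ∪ B) := by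
  classical
  obtain ⟨hA1, s, hs⟩ := hA
  obtain ⟨hB1, t, ht⟩ := hB
  refine ⟨hA1.union hB1, s ∪ t, ?_⟩
  rw [Finset.set_biUnion_union]
  exact Set.union_subset_union hs ht

lemma gc_smul {A : Set X} (hA : GammaCovers Γ Y A) (g : Γ) : GammaCovers Γ Y (g • A) := by
  classical
  obtain ⟨h1, s, hs⟩ := hA
  refine ⟨h1.smul g, s.image (g * ·), ?_⟩
  intro x hx
  rw [Set.mem_smul_set] at hx
  obtain ⟨y, hy, rfl⟩ := hx
  have hy2 := hs hy
  simp only [Set.mem_iUnion, exists_prop] at hy2 ⊢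
  obtain ⟨a, ha, hya⟩ := hy2
  exact ⟨g * a, Finset.mem_image_of_mem _ ha, by rw [mul_smul]; exact Set.smul_mem_smul_set hya⟩

lemma gc_biUnion {ι : Type*} (t : Finset ι) (P : ι → Set X) :
    (∀ i ∈ t, GammaCovers Γ Y (P i)) → GammaCovers Γ Y (⋃ i ∈ t, P i) := by
  classical
  induction t using Finset.induction_on with
  | empty => intro _; simpa using (gc_empty (Γ := Γ) (Y := Y))
  | @insert a u ha ih =>
    intro h
    rw [Finset.set_biUnion_insert]
    exact gc_union (h a (Finset.mem_insert_self _ _))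
      (ih fun i hi => h i (Finset.mem_insert_of_mem hi))

lemma gc_sUnion {𝒪 : Set (Set X)} (hfin : 𝒪.Finite) (h : ∀ A ∈ 𝒪, GammaCovers Γ Y A) :
    GammaCovers Γ Y (⋃₀ 𝒪) := by
  classical
  have he : ⋃₀ 𝒪 = ⋃ D ∈ hfin.toFinset, D := by
    rw [Set.sUnion_eq_biUnion]
    ext x
    simp [Set.Finite.mem_toFinset]
  rw [he]
  exact gc_biUnion _ _ fun D hD => h D (hfin.mem_toFinset.mp hD)

lemma smul_OU (A : Set X) (g : Γ) : g • (⋃ h : Γ, h • A) = ⋃ h : Γ, h • A := by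
  rw [Set.smul_set_iUnion]
  ext x
  simp only [Set.mem_iUnion]
  constructor
  · rintro ⟨h, hx⟩
    exact ⟨g * h, by rwa [mul_smul]⟩
  · rintro ⟨h, hx⟩
    refine ⟨g⁻¹ * h, ?_⟩
    rw [← mul_smul, mul_inv_cancel_left]
    exact hx

lemma OU_eq_sUnion (A : Set X) : (⋃ h : Γ, h • A) = ⋃₀ (orbit Γ A) := by
  ext x
  simp only [Set.mem_iUnion, Set.mem_sUnion, MulAction.mem_orbit_iff]
  constructor
  · rintro ⟨h, hx⟩
    exact ⟨h • A, ⟨h, rfl⟩, hx⟩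
  · rintro ⟨D, ⟨h, rfl⟩, hx⟩
    exact ⟨h, hx⟩

lemma isClosed_OU {A : Set X} (hA : IsClosed A) (hfin : (orbit Γ A).Finite) :
    IsClosed (⋃ h : Γ, h • A) := by
  rw [OU_eq_sUnion, Set.sUnion_eq_biUnion]
  exact hfin.isClosed_biUnion fun D hD => by
    obtain ⟨h, rfl⟩ := MulAction.mem_orbit_iff.mp hD
    exact hA.smul h

lemma gc_OU {A : Set X} (hA : GammaCovers Γ Y A) (hfin : (orbit Γ A).Finite) :
    GammaCovers Γ Y (⋃ h : Γ, h • A) := by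
  rw [OU_eq_sUnion]
  refine gc_sUnion hfin fun D hD => ?_
  obtain ⟨h, rfl⟩ := MulAction.mem_orbit_iff.mp hD
  exact gc_smul hA h


theorem main_null
    (f : Set X → ℝ) (Y : Set X)
    (hf01 : ∀ A : Set X, IsClosed A → 0 ≤ f A ∧ f A ≤ 1)
    (hI : ∀ A B : Set X, IsClosed A → IsClosed B → B ⊆ A → f B ≤ f A)
    (hII : ∀ (A : Set X) (g : Γ), IsClosed A → f (A ∩ g • A) = 0 → 2 * f A ≤ f (A ∪ g • A))
    (hstable : ∀ Z : Set X, GammaCovers Γ Y Z → (∀ g : Γ, g • Z = Z) → f Z = 0)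
    (ξ : Ordinal) :
    ∀ L : Finset (Set X),
      (∀ C ∈ L, GammaCovers Γ Y C ∧ rnk Γ C < ξ) →
      ∀ S : Set X, GammaCovers Γ Y S → (∀ g : Γ, g • S = S) →
      ∀ B : Set X, GammaCovers Γ Y B → B ⊆ (⋃ C ∈ L, C) ∪ S → f B = 0 := by
  induction ξ using Ordinal.induction with
  | h ξ IH =>
  intro L hL S hScov hSstab B hBcov hBsub
  classical
  by_contra hfB0
  have hfB : 0 < f B := lt_of_le_of_ne (hf01 B hBcov.1).1 (Ne.symm hfB0)
  rcases Finset.eq_empty_or_nonempty L with rfl | hLne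
  · have hBS : B ⊆ S := by simpa using hBsub
    have hle := hI S B hScov.1 hBcov.1 hBS
    rw [hstable S hScov hSstab] at hle
    linarith
  have hξpos : (⊥ : Ordinal) < ξ := by
    obtain ⟨C, hC⟩ := hLne
    exact bot_le.trans_lt (hL C hC).2
  set ξ' := L.sup (rnk Γ) with hξ'def
  have hξ'lt : ξ' < ξ := by
    rw [hξ'def, Finset.sup_lt_iff hξpos]
    exact fun C hC => (hL C hC).2
  -- the key doubling step
  have key : ∀ F : Finset Γ,
      ∃ g : Γ, f ((⋃ a ∈ F, a • B) ∩ g • ⋃ a ∈ F, a • B) = 0 := by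
    intro F
    set U : Set X := ⋃ a ∈ F, a • B with hUdef
    have hUclosed : IsClosed U := isClosed_biUnion_finset fun a _ => hBcov.1.smul a
    have hUcov : GammaCovers Γ Y U := gc_biUnion _ _ fun a _ => gc_smul hBcov a
    set T : Finset ((Γ × Γ) × (Set X × Set X)) := (F ×ˢ F) ×ˢ (L ×ˢ L) with hTdef
    have hTmem : ∀ τ ∈ T, τ.1.1 ∈ F ∧ τ.1.2 ∈ F ∧ τ.2.1 ∈ L ∧ τ.2.2 ∈ L := by
      intro τ hτ
      rw [hTdef] at hτ
      simp only [Finset.mem_product] at hτ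
      exact ⟨hτ.1.1, hτ.1.2, hτ.2.1, hτ.2.2⟩
    -- a representative for each solvable translate equation
    have hrep : ∀ τ : (Γ × Γ) × (Set X × Set X), ∃ gr : Γ,
        (∃ g' : Γ, g' • (τ.1.2 • τ.2.2) = τ.1.1 • τ.2.1) →
          gr • (τ.1.2 • τ.2.2) = τ.1.1 • τ.2.1 := by
      intro τ
      by_cases h : ∃ g' : Γ, g' • (τ.1.2 • τ.2.2) = τ.1.1 • τ.2.1
      · exact ⟨h.choose, fun _ => h.choose_spec⟩
      · exact ⟨1, fun hc => absurd hc h⟩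
    choose g₀ hg₀ using hrep
    -- choose g avoiding all bad cosets
    have hgex : ∃ g : Γ, ∀ τ ∈ T, (orbit Γ (τ.1.2 • τ.2.2)).Infinite →
        g • (τ.1.2 • τ.2.2) ≠ τ.1.1 • τ.2.1 := by
      set Bad : Finset ((Γ × Γ) × (Set X × Set X)) :=
        T.filter fun τ => (orbit Γ (τ.1.2 • τ.2.2)).Infinite ∧
          ∃ g' : Γ, g' • (τ.1.2 • τ.2.2) = τ.1.1 • τ.2.1 with hBaddef
      have hcovne : (⋃ τ ∈ Bad,
          (g₀ τ) • ((MulAction.stabilizer Γ (τ.1.2 • τ.2.2) : Subgroup Γ) : Set Γ)) ≠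
            Set.univ := by
        intro hcov
        obtain ⟨τ, hτ, hfi⟩ := Subgroup.exists_finiteIndex_of_leftCoset_cover hcov
        rw [hBaddef, Finset.mem_filter] at hτ
        have hinf := hτ.2.1
        haveI := hfi
        have hfinq : Finite (Γ ⧸ MulAction.stabilizer Γ (τ.1.2 • τ.2.2)) :=
          Subgroup.finite_quotient_of_finiteIndex
        have hfin : (orbit Γ (τ.1.2 • τ.2.2)).Finite := by
          rw [← Set.finite_coe_iff]
          exact Finite.of_equiv _ (MulAction.orbitEquivQuotientStabilizer Γ (τ.1.2 • τ.2.2)).symm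
        exact hinf hfin
      obtain ⟨g, hg⟩ := (Set.ne_univ_iff_exists_notMem _).mp hcovne
      refine ⟨g, fun τ hτ hinf heq => hg ?_⟩
      have hKp : ∃ g' : Γ, g' • (τ.1.2 • τ.2.2) = τ.1.1 • τ.2.1 := ⟨g, heq⟩
      have hτBad : τ ∈ Bad := by
        rw [hBaddef, Finset.mem_filter]
        exact ⟨hτ, hinf, hKp⟩
      refine Set.mem_biUnion hτBad ?_
      rw [Set.mem_smul_set_iff_inv_smul_mem, SetLike.mem_coe, MulAction.mem_stabilizer_iff,
        smul_eq_mul, mul_smul, heq, ← hg₀ τ hKp, inv_smul_smul]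
    obtain ⟨g, hgavoid⟩ := hgex
    refine ⟨g, ?_⟩
    set GoodT : Finset ((Γ × Γ) × (Set X × Set X)) :=
      T.filter fun τ => (orbit Γ (τ.1.2 • τ.2.2)).Infinite with hGoodTdef
    set FinT : Finset ((Γ × Γ) × (Set X × Set X)) :=
      T.filter fun τ => ¬(orbit Γ (τ.1.2 • τ.2.2)).Infinite with hFinTdef
    set L' : Finset (Set X) :=
      GoodT.image fun τ => (τ.1.1 • τ.2.1) ∩ g • (τ.1.2 • τ.2.2) with hL'def
    set S'' : Set X := S ∪ ⋃ τ ∈ FinT, ⋃ h : Γ, h • (τ.1.2 • τ.2.2) with hS''def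
    have hS''stab : ∀ g' : Γ, g' • S'' = S'' := by
      intro g'
      rw [hS''def, Set.smul_set_union, hSstab g', Set.smul_set_iUnion₂]
      congr 1
      exact Set.iUnion₂_congr fun τ _ => smul_OU (τ.1.2 • τ.2.2) g'
    have hS''cov : GammaCovers Γ Y S'' := by
      rw [hS''def]
      refine gc_union hScov (gc_biUnion _ _ fun τ hτ => ?_)
      have hτT : τ ∈ T := Finset.mem_of_mem_filter _ hτ
      have hfin : (orbit Γ (τ.1.2 • τ.2.2)).Finite := by
        have := (Finset.mem_filter.mp (by rwa [hFinTdef] at hτ)).2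
        exact Set.not_infinite.mp this
      exact gc_OU (gc_smul (hL _ (hTmem τ hτT).2.2.2).1 _) hfin
    have hcont : U ∩ g • U ⊆ (⋃ C ∈ L', C) ∪ S'' := by
      rintro x ⟨hx1, hx2⟩
      rw [hUdef, Set.mem_iUnion₂] at hx1
      obtain ⟨a, ha, hxa⟩ := hx1
      have hx2' : x ∈ ⋃ b ∈ F, g • (b • B) := by
        rw [hUdef, Set.smul_set_iUnion₂] at hx2
        exact hx2
      rw [Set.mem_iUnion₂] at hx2'
      obtain ⟨b, hb, hxb⟩ := hx2'
      have hxa2 : x ∈ (⋃ C ∈ L, a • C) ∪ S := by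
        have h1 : x ∈ a • ((⋃ C ∈ L, C) ∪ S) := Set.smul_set_mono hBsub hxa
        rwa [Set.smul_set_union, Set.smul_set_iUnion₂, hSstab a] at h1
      rcases hxa2 with h1 | h1
      swap
      · exact Or.inr (Or.inl h1)
      rw [Set.mem_iUnion₂] at h1
      obtain ⟨C, hCL, hxC⟩ := h1
      have hxb2 : x ∈ (⋃ C' ∈ L, g • (b • C')) ∪ S := by
        have h2 : x ∈ g • (b • ((⋃ C ∈ L, C) ∪ S)) :=
          Set.smul_set_mono (Set.smul_set_mono hBsub) hxb
        rwa [Set.smul_set_union, Set.smul_set_iUnion₂, hSstab b, Set.smul_set_union,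
          Set.smul_set_iUnion₂, hSstab g] at h2
      rcases hxb2 with h2 | h2
      swap
      · exact Or.inr (Or.inl h2)
      rw [Set.mem_iUnion₂] at h2
      obtain ⟨C', hC'L, hxC'⟩ := h2
      have hτT : (((a, b), (C, C')) : (Γ × Γ) × (Set X × Set X)) ∈ T := by
        rw [hTdef]
        simp only [Finset.mem_product]
        exact ⟨⟨ha, hb⟩, hCL, hC'L⟩
      by_cases hinf : (orbit Γ (b • C')).Infinite
      · refine Or.inl ?_
        have hmemGood : (((a, b), (C, C')) : (Γ × Γ) × (Set X × Set X)) ∈ GoodT := by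
          rw [hGoodTdef, Finset.mem_filter]
          exact ⟨hτT, hinf⟩
        have hmemL' : ((a • C) ∩ g • (b • C')) ∈ L' := by
          rw [hL'def]
          exact Finset.mem_image_of_mem _ hmemGood
        exact Set.mem_iUnion₂.mpr ⟨(a • C) ∩ g • (b • C'), hmemL', hxC, hxC'⟩
      · refine Or.inr (Or.inr ?_)
        rw [Set.mem_iUnion₂]
        refine ⟨((a, b), (C, C')), ?_, ?_⟩
        · rw [hFinTdef, Finset.mem_filter]
          exact ⟨hτT, hinf⟩
        · rw [Set.mem_iUnion]
          exact ⟨g, hxC'⟩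
    have hL'cond : ∀ Q ∈ L', GammaCovers Γ Y Q ∧ rnk Γ Q < ξ' := by
      intro Q hQ
      rw [hL'def] at hQ
      obtain ⟨τ, hτGood, rfl⟩ := Finset.mem_image.mp hQ
      have hτT : τ ∈ T := Finset.mem_of_mem_filter _ hτGood
      have hinf : (orbit Γ (τ.1.2 • τ.2.2)).Infinite := by
        have := Finset.mem_filter.mp (by rwa [hGoodTdef] at hτGood)
        exact this.2
      obtain ⟨ha, hb, hCL, hC'L⟩ := hTmem τ hτT
      have hCclosed : IsClosed τ.2.1 := ((hL _ hCL).1).1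
      have hC'closed : IsClosed τ.2.2 := ((hL _ hC'L).1).1
      have hPclosed : IsClosed ((τ.1.1 • τ.2.1) ∩ g • (τ.1.2 • τ.2.2)) :=
        (hCclosed.smul _).inter ((hC'closed.smul _).smul g)
      have hPcov : GammaCovers Γ Y ((τ.1.1 • τ.2.1) ∩ g • (τ.1.2 • τ.2.2)) :=
        gc_subset (gc_smul (hL _ hCL).1 _) hPclosed Set.inter_subset_left
      refine ⟨hPcov, ?_⟩
      have hne : g • (τ.1.2 • τ.2.2) ≠ τ.1.1 • τ.2.1 := hgavoid τ hτT hinf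
      rcases eq_or_ne ((τ.1.1 • τ.2.1) ∩ g • (τ.1.2 • τ.2.2)) (τ.1.1 • τ.2.1) with hPeq | hPne
      · have hss : ((τ.1.1 • τ.2.1) ∩ g • (τ.1.2 • τ.2.2)) ⊂ (g * τ.1.2) • τ.2.2 := by
          rw [Set.ssubset_iff_subset_ne, mul_smul]
          refine ⟨Set.inter_subset_right, fun hcon => hne ?_⟩
          rw [← hcon, hPeq]
        exact lt_of_lt_of_le (rnk_lt_of_ssubset_smul hPclosed hC'closed hss)
          (Finset.le_sup hC'L)
      · have hss : ((τ.1.1 • τ.2.1) ∩ g • (τ.1.2 • τ.2.2)) ⊂ τ.1.1 • τ.2.1 :=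
          Set.ssubset_iff_subset_ne.mpr ⟨Set.inter_subset_left, hPne⟩
        exact lt_of_lt_of_le (rnk_lt_of_ssubset_smul hPclosed hCclosed hss)
          (Finset.le_sup hCL)
    have hUgclosed : IsClosed (U ∩ g • U) := hUclosed.inter (hUclosed.smul g)
    have hUgcov : GammaCovers Γ Y (U ∩ g • U) :=
      gc_subset hUcov hUgclosed Set.inter_subset_left
    exact IH ξ' hξ'lt L' hL'cond S'' hS''cov hS''stab (U ∩ g • U) hUgcov hcont
  -- iterated doubling
  have grow : ∀ k : ℕ, ∃ F : Finset Γ, (2 : ℝ) ^ k * f B ≤ f (⋃ a ∈ F, a • B) := by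
    intro k
    induction k with
    | zero =>
      refine ⟨{1}, ?_⟩
      have h1 : (⋃ a ∈ ({1} : Finset Γ), a • B) = B := by
        simp [one_smul]
      rw [h1, pow_zero, one_mul]
    | succ k ih =>
      obtain ⟨F, hF⟩ := ih
      obtain ⟨g, hg0⟩ := key F
      set U : Set X := ⋃ a ∈ F, a • B with hUdef
      have hUclosed : IsClosed U := isClosed_biUnion_finset fun a _ => hBcov.1.smul a
      have hdouble := hII U g hUclosed hg0
      refine ⟨F ∪ F.image (g * ·), ?_⟩
      have hUnion : (⋃ a ∈ F ∪ F.image (g * ·), a • B) = U ∪ g • U := by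
        rw [Finset.set_biUnion_union]
        congr 1
        rw [hUdef, Set.smul_set_iUnion₂]
        ext x
        simp only [Set.mem_iUnion, exists_prop, Finset.mem_image]
        constructor
        · rintro ⟨c, ⟨a, ha, rfl⟩, hx⟩
          exact ⟨a, ha, by rwa [← mul_smul]⟩
        · rintro ⟨a, ha, hx⟩
          exact ⟨g * a, ⟨a, ha, rfl⟩, by rw [mul_smul]; exact hx⟩
      rw [hUnion]
      have h2 : (2 : ℝ) ^ (k + 1) * f B = 2 * ((2 : ℝ) ^ k * f B) := by ring
      rw [h2]
      calc 2 * ((2 : ℝ) ^ k * f B) ≤ 2 * f U := by linarith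
        _ ≤ f (U ∪ g • U) := hdouble
  obtain ⟨k, hk⟩ := pow_unbounded_of_one_lt (1 / f B) (one_lt_two (α := ℝ))
  obtain ⟨F, hF⟩ := grow k
  have hUclosed : IsClosed (⋃ a ∈ F, a • B) := isClosed_biUnion_finset fun a _ => hBcov.1.smul a
  have hle1 := (hf01 _ hUclosed).2
  have hgt1 : 1 < (2 : ℝ) ^ k * f B := by
    rw [div_lt_iff₀ hfB] at hk
    linarith
  linarith

end GammaCoversAux

/-- Let `X` be a Noetherian topological space and `Γ` a group acting on `X` by
homeomorphisms.  Let `f` be a `[0,1]`-valued function on closed subsets of `X` which is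
monotone (I) and satisfies the doubling condition (II).  If a closed `Y ⊆ X` `Γ`-covers
some closed `W` with `f W > 0`, then `Y` `Γ`-covers some closed `Γ`-stable `Z` with
`f Z > 0`. -/
theorem gammaCovers_stable_of_pos {Γ X : Type*} [Group Γ] [MulAction Γ X]
    [TopologicalSpace X] [TopologicalSpace.NoetherianSpace X] [ContinuousConstSMul Γ X]
    (f : Set X → ℝ)
    (hf01 : ∀ Y : Set X, IsClosed Y → 0 ≤ f Y ∧ f Y ≤ 1)
    (hI : ∀ Y Z : Set X, IsClosed Y → IsClosed Z → Z ⊆ Y → f Z ≤ f Y)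
    (hII : ∀ (Y : Set X) (g : Γ), IsClosed Y → f (Y ∩ g • Y) = 0 →
      2 * f Y ≤ f (Y ∪ g • Y))
    (Y W : Set X) (hY : IsClosed Y) (hcov : GammaCovers Γ Y W) (hW : 0 < f W) :
    ∃ Z : Set X, GammaCovers Γ Y Z ∧ (∀ g : Γ, g • Z = Z) ∧ 0 < f Z := by

  classical
  by_contra hcon
  push_neg at hcon
  have hstable : ∀ Z : Set X, GammaCovers Γ Y Z → (∀ g : Γ, g • Z = Z) → f Z = 0 :=
    fun Z hZ hZs => le_antisymm (hcon Z hZ hZs) (hf01 Z hZ.1).1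
  have h0 := GammaCoversAux.main_null f Y hf01 hI hII hstable
    (GammaCoversAux.rnk Γ W + 1) {W} ?_ ∅ GammaCoversAux.gc_empty ?_ W hcov ?_
  · exact hW.ne' h0
  · intro C hC
    rw [Finset.mem_singleton] at hC
    subst hC
    refine ⟨hcov, ?_⟩
    rw [Ordinal.add_one_eq_succ]
    exact Order.lt_succ _
  · intro g
    exact Set.smul_set_empty
  · intro x hx
    refine Or.inl ?_
    simpa using hx
end

section
/- Let A be an integral domain that is finitely generated as a ℤ-algebra, with fraction field K. Let B be a finitely generated A-algebra and I ⊆ B an ideal such that (B/I) ⊗_A K = 0. Then there exists a maximal ideal m of A such that there is no A-algebra homomorphism B/I → A/m. (Equivalently: if a closed subset X of an affine A-scheme of finite type does not meet the generic fiber, then X(A/m) is empty for some maximal ideal m of A.) -/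
instance : IsJacobsonRing ℤ := by
  rw [isJacobsonRing_iff_prime_eq]
  intro P hP
  by_cases hPb : P = ⊥
  · subst hPb
    refine le_antisymm ?_ Ideal.le_jacobson
    intro x hx
    rw [Ideal.mem_jacobson_bot] at hx
    have hx' := hx x
    rw [Int.isUnit_iff] at hx'
    have : x = 0 := by rcases hx' with h | h <;> nlinarith [mul_self_nonneg x]
    simp [this]
  · haveI : P.IsMaximal := by haveI := hP; exact IsPrime.to_maximal_ideal hPb
    exact Ideal.jacobson_eq_self_of_isMaximal

/-- Let `A` be an integral domain finitely generated as a `ℤ`-algebra with fraction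
field `K`, let `B` be a finitely generated `A`-algebra, and let `I ⊆ B` be an ideal with
`(B/I) ⊗_A K = 0`.  Then there is a maximal ideal `m` of `A` admitting no `A`-algebra
homomorphism `B/I → A/m`. -/
theorem exists_maximal_ideal_no_point (A : Type*) [CommRing A] [IsDomain A]
    (hA : Algebra.FiniteType ℤ A)
    (K : Type*) [Field K] [Algebra A K] [IsFractionRing A K]
    (B : Type*) [CommRing B] [Algebra A B] (hB : Algebra.FiniteType A B)
    (I : Ideal B) (h : Subsingleton (TensorProduct A (B ⧸ I) K)) :
    ∃ m : Ideal A, m.IsMaximal ∧ IsEmpty ((B ⧸ I) →ₐ[A] A ⧸ m) := by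
  haveI := hA
  haveI : IsJacobsonRing A := isJacobsonRing_of_finiteType (A := ℤ)
  -- transfer subsingleton to `K ⊗[A] (B ⧸ I)`
  haveI h' : Subsingleton (TensorProduct A K (B ⧸ I)) :=
    (TensorProduct.comm A K (B ⧸ I)).toEquiv.subsingleton_congr.mpr h
  -- the map `B⧸I → K ⊗ (B⧸I)` is a localization at nonzero divisors
  haveI : IsLocalizedModule (nonZeroDivisors A) (TensorProduct.mk A K (B ⧸ I) 1) :=
    (isLocalizedModule_iff_isBaseChange (nonZeroDivisors A) K _).mpr
      (TensorProduct.isBaseChange A (B ⧸ I) K)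
  have h10 : TensorProduct.mk A K (B ⧸ I) 1 (1 : B ⧸ I) =
      TensorProduct.mk A K (B ⧸ I) 1 (0 : B ⧸ I) := Subsingleton.elim _ _
  obtain ⟨c, hc⟩ :=
    (IsLocalizedModule.eq_iff_exists (nonZeroDivisors A) (TensorProduct.mk A K (B ⧸ I) 1)).mp h10
  rw [smul_zero] at hc
  have hc0 : (c : A) ≠ 0 := nonZeroDivisors.coe_ne_zero c
  have hcnil : (c : A) ∉ ((⊥ : Ideal A).jacobson) := by
    rw [(‹IsJacobsonRing A›).out (Ideal.isRadical_bot_of_noZeroDivisors (R := A))]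
    simp only [Submodule.bot_coe, Set.mem_singleton_iff, SetLike.mem_coe, Ideal.mem_bot]; exact hc0
  rw [Ideal.jacobson, Ideal.mem_sInf] at hcnil
  push_neg at hcnil
  obtain ⟨m, ⟨-, hm⟩, hcm⟩ := hcnil
  refine ⟨m, hm, ⟨fun φ => hcm ?_⟩⟩
  have : algebraMap A (B ⧸ I) (c : A) = 0 := by
    rw [Algebra.algebraMap_eq_smul_one]
    exact hc
  have := congrArg φ this
  rw [AlgHom.commutes, map_zero] at this
  exact (Ideal.Quotient.eq_zero_iff_mem).mp this
end

section
/- Let H be a topological group with only finitely many connected components, and let Γ ≤ H be a dense subgroup acting on H by left translation. Then a nonempty closed subset Y ⊆ H is Γ-finite (has finite orbit under left translation by Γ) if and only if Y is a union of connected components of H. -/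
open scoped Pointwise

private lemma cc_mul_left {G : Type*} [Group G] [TopologicalSpace G] [IsTopologicalGroup G]
    (g y : G) : connectedComponent (g * y) = (fun h => g * h) '' connectedComponent y := by
  apply Set.Subset.antisymm
  · intro z hz
    have h1 := (continuous_mul_left g⁻¹).image_connectedComponent_subset (g * y)
    refine ⟨g⁻¹ * z, ?_, by simp⟩
    have : g⁻¹ * z ∈ connectedComponent (g⁻¹ * (g * y)) := h1 ⟨z, hz, rfl⟩
    simpa using this
  · have := (continuous_mul_left g).image_connectedComponent_subset y
    simpa using this

private lemma cc_mul_right {G : Type*} [Group G] [TopologicalSpace G] [IsTopologicalGroup G]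
    (y : G) : connectedComponent y = (fun h => h * y) '' connectedComponent (1 : G) := by
  apply Set.Subset.antisymm
  · intro z hz
    have h1 := (continuous_mul_right y⁻¹).image_connectedComponent_subset y
    refine ⟨z * y⁻¹, ?_, by simp⟩
    have : z * y⁻¹ ∈ connectedComponent (y * y⁻¹) := h1 ⟨z, hz, rfl⟩
    simpa using this
  · have := (continuous_mul_right y).image_connectedComponent_subset 1
    simpa using this

/-- Let `H` be a topological group with finitely many connected components and let
`Γ ≤ H` be a dense subgroup, acting on `H` by left translation.  A nonempty closed
subset `Y ⊆ H` has finite `Γ`-orbit if and only if it is a union of connected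
components of `H`. -/
theorem gammaFinite_iff_union_of_components (H : Type*) [Group H] [TopologicalSpace H]
    [IsTopologicalGroup H] (hcomp : Finite (ConnectedComponents H))
    (Γ : Subgroup H) (hdense : Dense (Γ : Set H))
    (Y : Set H) (hne : Y.Nonempty) (hcl : IsClosed Y) :
    (Set.range fun g : Γ => (g : H) • Y).Finite ↔
      ∀ y ∈ Y, connectedComponent y ⊆ Y := by
  constructor
  · -- hard direction
    intro hfin y hy
    -- the orbit of Y under Γ (acting via H)
    have horb : (MulAction.orbit Γ Y).Finite := by
      exact hfin
    haveI : Finite (MulAction.orbit Γ Y) := horb.to_subtype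
    haveI hq : Finite (Γ ⧸ MulAction.stabilizer Γ Y) :=
      Finite.of_equiv _ (MulAction.orbitEquivQuotientStabilizer Γ Y)
    set S : Subgroup H := (MulAction.stabilizer Γ Y).map Γ.subtype with hS
    set T : Subgroup H := S.topologicalClosure with hT
    have hTclosed : IsClosed (T : Set H) := by
      rw [hT]
      exact isClosed_closure
    -- covering of H by finitely many cosets of T
    have hScosets : (Γ : Set H) ⊆
        ⋃ q : Γ ⧸ MulAction.stabilizer Γ Y, (((Quotient.out q : Γ) : H) • (T : Set H)) := by
      intro x hx
      refine Set.mem_iUnion.2 ⟨QuotientGroup.mk (⟨x, hx⟩ : Γ), ?_⟩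
      set g : Γ := ⟨x, hx⟩
      set q := QuotientGroup.mk (s := MulAction.stabilizer Γ Y) g
      have hout : (Quotient.out q)⁻¹ * g ∈ MulAction.stabilizer Γ Y := by
        have : QuotientGroup.mk (s := MulAction.stabilizer Γ Y) (Quotient.out q) = q :=
          QuotientGroup.out_eq' q
        exact QuotientGroup.eq.1 this
      have hmem : ((Quotient.out q : Γ) : H)⁻¹ * x ∈ T := by
        apply S.le_topologicalClosure
        exact ⟨(Quotient.out q)⁻¹ * g, hout, rfl⟩
      exact Set.mem_smul_set_iff_inv_smul_mem.2 hmem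
    have hcover : (Set.univ : Set H) ⊆
        ⋃ q : Γ ⧸ MulAction.stabilizer Γ Y, (((Quotient.out q : Γ) : H) • (T : Set H)) := by
      have hclosed : IsClosed (⋃ q : Γ ⧸ MulAction.stabilizer Γ Y,
          (((Quotient.out q : Γ) : H) • (T : Set H))) :=
        isClosed_iUnion_of_finite fun q => hTclosed.smul _
      have := closure_mono hScosets
      rwa [hdense.closure_eq, hclosed.closure_eq] at this
    -- T has finite index
    haveI : Finite (H ⧸ T) := by
      refine Finite.of_surjective
        (fun q : Γ ⧸ MulAction.stabilizer Γ Y =>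
          QuotientGroup.mk (s := T) ((Quotient.out q : Γ) : H)) ?_
      intro h
      refine QuotientGroup.induction_on h ?_
      intro x
      obtain ⟨q, hxq⟩ := Set.mem_iUnion.1 (hcover (Set.mem_univ x))
      obtain ⟨t, ht, hxt⟩ := hxq
      refine ⟨q, ?_⟩
      apply QuotientGroup.eq.2
      have hxe : ((Quotient.out q : Γ) : H)⁻¹ * x = t := by
        rw [← hxt]; simp only [smul_eq_mul]; group
      rw [hxe]; exact ht
    haveI : T.FiniteIndex := Subgroup.finiteIndex_of_finite_quotient (H := T)
    have hTopen : IsOpen (T : Set H) := Subgroup.isOpen_of_isClosed_of_finiteIndex T hTclosed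
    have hcc1 : connectedComponent (1 : H) ⊆ (T : Set H) :=
      IsClopen.connectedComponent_subset ⟨hTclosed, hTopen⟩ T.one_mem
    have hTY : ∀ t ∈ T, ∀ z ∈ Y, t * z ∈ Y := by
      intro t ht z hz
      have hmaps : Set.MapsTo (fun s => s * z) (S : Set H) Y := by
        rintro _ ⟨γ, hγ, rfl⟩
        have hγY : ((γ : H)) • Y = Y := MulAction.mem_stabilizer_iff.1 hγ
        have : (γ : H) • z ∈ (γ : H) • Y := Set.smul_mem_smul_set hz
        rw [hγY] at this
        simpa [smul_eq_mul] using this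
      have ht' : t ∈ closure (S : Set H) := ht
      have := map_mem_closure (continuous_mul_right z) ht' hmaps
      rwa [hcl.closure_eq] at this
    intro z hz
    rw [cc_mul_right y] at hz
    obtain ⟨h, hh, rfl⟩ := hz
    exact hTY h (hcc1 hh) y hy
  · -- easy direction
    intro hY
    have hsat : ∀ g : Γ, ∀ z w : H, w ∈ (g : H) • Y →
        (z : ConnectedComponents H) = (w : ConnectedComponents H) → z ∈ (g : H) • Y := by
      rintro g z w ⟨u, hu, rfl⟩ hzw
      have hcc : connectedComponent z = connectedComponent ((g : H) • u) :=
        ConnectedComponents.coe_eq_coe.1 hzw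
      have hz : z ∈ connectedComponent ((g : H) * u) := by
        rw [← smul_eq_mul, ← hcc]; exact mem_connectedComponent
      rw [cc_mul_left] at hz
      obtain ⟨x, hx, rfl⟩ := hz
      exact ⟨x, hY u hu hx, rfl⟩
    haveI := hcomp
    apply Set.Finite.of_finite_image (f := Set.image (ConnectedComponents.mk : H → ConnectedComponents H))
    · exact Set.toFinite _
    · rintro A ⟨g, rfl⟩ B ⟨g', rfl⟩ hAB
      ext z
      constructor
      · intro hz
        have : (z : ConnectedComponents H) ∈
            (ConnectedComponents.mk : H → ConnectedComponents H) '' ((g' : H) • Y) := by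
          rw [← hAB]; exact ⟨z, hz, rfl⟩
        obtain ⟨w, hw, hwz⟩ := this
        exact hsat g' z w hw hwz.symm
      · intro hz
        have : (z : ConnectedComponents H) ∈
            (ConnectedComponents.mk : H → ConnectedComponents H) '' ((g : H) • Y) := by
          rw [hAB]; exact ⟨z, hz, rfl⟩
        obtain ⟨w, hw, hwz⟩ := this
        exact hsat g z w hw hwz.symm
end

section
/- Assume that every finitely generated residually finite group satisfying a probabilistic identity satisfies an identity. Then every finitely generated residually finite group Γ either satisfies an identity or is randomly free. In particular, under this assumption: (i) if Γ does not satisfy an identity then its profinite completion contains a nonabelian free subgroup; (ii) if the profinite completion of Γ contains a nonabelian free subgroup, then for every n ≥ 1 almost all n-tuples in the profinite completion (with respect to Haar measure) freely generate a free subgroup of rank n. -/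
universe u

/-- A group is residually finite if every nontrivial element survives in some finite
quotient. -/
def IsResiduallyFinite (Γ : Type u) [Group Γ] : Prop :=
  ∀ g : Γ, g ≠ 1 → ∃ N : Subgroup Γ, N.Normal ∧ N.FiniteIndex ∧ g ∉ N

/-- The probability that a word `w ∈ F_n` evaluates to `1` at an independent uniformly
random `n`-tuple of elements of `Q`. -/
noncomputable def wordProb (Q : Type*) [Group Q] {n : ℕ} (w : FreeGroup (Fin n)) : ℝ :=
  (Nat.card {h : Fin n → Q // FreeGroup.lift h w = 1} : ℝ) / (Nat.card Q : ℝ) ^ n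

/-- A nontrivial word `w ∈ F_n` is a probabilistic identity of `Γ` if there is `ε > 0`
such that in every finite quotient of `Γ` the probability that `w = 1` is at least `ε`. -/
def IsProbabilisticIdentity (Γ : Type u) [Group Γ] {n : ℕ} (w : FreeGroup (Fin n)) : Prop :=
  w ≠ 1 ∧ ∃ ε : ℝ, 0 < ε ∧
    ∀ (N : Subgroup Γ) (_ : N.Normal), N.FiniteIndex → ε ≤ wordProb (Γ ⧸ N) w

/-- `Γ` satisfies a (nontrivial) identity. -/
def SatisfiesIdentity (Γ : Type u) [Group Γ] : Prop :=
  ∃ (n : ℕ) (w : FreeGroup (Fin n)), w ≠ 1 ∧ ∀ g : Fin n → Γ, FreeGroup.lift g w = 1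

variable (Γ : Type u) [Group Γ]

/-- The index set for the profinite completion: normal subgroups of finite index. -/
def FinIndexNormal := {N : Subgroup Γ // N.Normal ∧ N.FiniteIndex}

instance (N : FinIndexNormal Γ) : N.1.Normal := N.2.1
instance (N : FinIndexNormal Γ) : N.1.FiniteIndex := N.2.2
instance (N : FinIndexNormal Γ) : TopologicalSpace (Γ ⧸ N.1) := ⊥
instance (N : FinIndexNormal Γ) : DiscreteTopology (Γ ⧸ N.1) := ⟨rfl⟩
instance (N : FinIndexNormal Γ) : IsTopologicalGroup (Γ ⧸ N.1) where
  continuous_mul := continuous_of_discreteTopology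
  continuous_inv := continuous_of_discreteTopology

/-- The ambient product of all finite quotients of `Γ`. -/
abbrev ProfCompAmbient := ∀ N : FinIndexNormal Γ, Γ ⧸ N.1

/-- The canonical (diagonal) homomorphism of `Γ` into the product of its finite quotients. -/
def toProfComp : Γ →* ProfCompAmbient Γ where
  toFun g := fun _ => QuotientGroup.mk g
  map_one' := rfl
  map_mul' _ _ := rfl

/-- The profinite completion of `Γ`. -/
def ProfiniteCompletion : Subgroup (ProfCompAmbient Γ) :=
  (toProfComp Γ).range.topologicalClosure

/-- The profinite completion of `Γ`, as a (compact) topological group. -/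
abbrev ProfiniteCompletionGrp := ↥(ProfiniteCompletion Γ)

instance : CompactSpace (ProfiniteCompletionGrp Γ) :=
  isCompact_iff_compactSpace.mp
    ((Subgroup.isClosed_topologicalClosure ((toProfComp Γ).range)).isCompact)

noncomputable instance : MeasurableSpace (ProfiniteCompletionGrp Γ) := borel _
instance : BorelSpace (ProfiniteCompletionGrp Γ) := ⟨rfl⟩

/-- `Γ` is randomly free: for every `n ≥ 1`, the set of `n`-tuples of its profinite
completion freely generating a free subgroup of rank `n` has Haar measure `1`. -/
def RandomlyFree : Prop :=
  ∀ (μ : MeasureTheory.Measure (ProfiniteCompletionGrp Γ)),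
    μ.IsHaarMeasure → MeasureTheory.IsProbabilityMeasure μ →
    ∀ n : ℕ, 1 ≤ n →
      MeasureTheory.Measure.pi (fun _ : Fin n => μ)
        {g : Fin n → ProfiniteCompletionGrp Γ |
          Function.Injective ⇑(FreeGroup.lift g : FreeGroup (Fin n) →* ProfiniteCompletionGrp Γ)}
        = 1


section PPAuxSec

namespace PPAux
open FreeGroup List

variable {β : Type*} [DecidableEq β]

lemma toWord_cons_mul (x : β) (s : Bool) (u : FreeGroup β)
    (h : ∀ t, u.toWord ≠ (x, !s) :: t) :
    (FreeGroup.mk [(x,s)] * u).toWord = (x,s) :: u.toWord := by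
  conv_lhs => rw [← FreeGroup.mk_toWord (x := u)]
  rw [FreeGroup.mul_mk, List.singleton_append, FreeGroup.toWord_mk, FreeGroup.reduce.cons,
    FreeGroup.reduce_toWord]
  cases hu : u.toWord with
  | nil => simp
  | cons hd tl =>
    obtain ⟨y, b⟩ := hd
    simp only []
    rw [if_neg]
    rintro ⟨h1, h2⟩
    subst h1
    exact h tl (by rw [hu, h2, Bool.not_not])

omit [DecidableEq β] in
lemma of_eq_mk (x : β) : FreeGroup.of x = FreeGroup.mk [(x, true)] := rfl

omit [DecidableEq β] in
lemma inv_of_eq_mk (x : β) : (FreeGroup.of x)⁻¹ = FreeGroup.mk [(x, false)] := by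
  rw [of_eq_mk, FreeGroup.inv_mk]
  rfl

lemma toWord_of_mul (x : β) (u : FreeGroup β)
    (h : ∀ t, u.toWord ≠ (x, false) :: t) :
    (FreeGroup.of x * u).toWord = (x, true) :: u.toWord := by
  rw [of_eq_mk]
  exact toWord_cons_mul x true u (by simpa using h)

lemma toWord_invof_mul (x : β) (u : FreeGroup β)
    (h : ∀ t, u.toWord ≠ (x, true) :: t) :
    ((FreeGroup.of x)⁻¹ * u).toWord = (x, false) :: u.toWord := by
  rw [inv_of_eq_mk]
  exact toWord_cons_mul x false u (by simpa using h)

lemma toWord_pow_mul (x : β) (k : ℕ) (u : FreeGroup β)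
    (h : ∀ t, u.toWord ≠ (x, false) :: t) :
    (FreeGroup.of x ^ k * u).toWord = List.replicate k (x, true) ++ u.toWord := by
  induction k with
  | zero => simp
  | succ k ih =>
    rw [pow_succ', mul_assoc, toWord_of_mul _ _ ?_, ih, List.replicate_succ, List.cons_append]
    intro t ht
    rw [ih] at ht
    cases k with
    | zero => exact h t (by simpa using ht)
    | succ k =>
      rw [List.replicate_succ, List.cons_append, List.cons.injEq] at ht
      simp at ht

/-- The prefix word `a^(i+1) b^{±1}`. -/
def P (i : ℕ) (s : Bool) : List (Fin 2 × Bool) :=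
  List.replicate (i+1) ((0 : Fin 2), true) ++ [((1 : Fin 2), s)]

lemma P_length (i : ℕ) (s : Bool) : (P i s).length = i + 2 := by
  simp [P]

lemma P_prefix {i j : ℕ} {s t : Bool} (h : P i s <+: P j t) : i = j ∧ s = t := by
  have hlen := h.length_le
  rw [P_length, P_length] at hlen
  have hij : i ≤ j := by omega
  have hieq : i = j := by
    by_contra hne
    have hij' : i < j := lt_of_le_of_ne hij hne
    have h1 : (P i s)[i+1]'(by rw [P_length]; omega) = (P j t)[i+1]'(by rw [P_length]; omega) :=
      h.getElem _
    simp only [P] at h1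
    rw [List.getElem_append_right (by simp), List.getElem_append_left (by simp; omega)] at h1
    simp at h1
  subst hieq
  refine ⟨rfl, ?_⟩
  have h1 : (P i s)[i+1]'(by rw [P_length]; omega) = (P i t)[i+1]'(by rw [P_length]; omega) :=
    h.getElem _
  simp only [P] at h1
  rw [List.getElem_append_right (by simp), List.getElem_append_right (by simp)] at h1
  simpa using h1

def XS (i : ℕ) (s : Bool) : Set (FreeGroup (Fin 2)) := {w | P i s <+: w.toWord}

lemma XS_disjoint {i j : ℕ} {s t : Bool} (h : (i, s) ≠ (j, t)) :
    Disjoint (XS i s) (XS j t) := by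
  rw [Set.disjoint_left]
  intro w hw1 hw2
  rcases List.prefix_or_prefix_of_prefix hw1 hw2 with hp | hp
  · obtain ⟨h1, h2⟩ := P_prefix hp; exact h (by simp [h1, h2])
  · obtain ⟨h1, h2⟩ := P_prefix hp; exact h (by simp [h1, h2])

lemma mem_XS_of (i : ℕ) (s : Bool) (v : FreeGroup (Fin 2)) (t : List (Fin 2 × Bool))
    (hv : v.toWord = ((1 : Fin 2), s) :: t) :
    FreeGroup.of 0 ^ (i+1) * v ∈ XS i s := by
  have h : (FreeGroup.of (0 : Fin 2) ^ (i+1) * v).toWord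
      = List.replicate (i+1) ((0:Fin 2), true) ++ v.toWord := by
    apply toWord_pow_mul
    intro t' ht'
    rw [hv] at ht'
    simp at ht'
  rw [XS, Set.mem_setOf_eq, h, hv, P]
  exact ⟨t, by simp⟩

/-- Core ping-pong step. -/
lemma pp_step (i : ℕ) (s : Bool) (w : FreeGroup (Fin 2))
    (hw : ¬ (P i (!s) <+: w.toWord)) :
    FreeGroup.of 0 ^ (i+1) * FreeGroup.mk [((1 : Fin 2), s)] * (FreeGroup.of 0 ^ (i+1))⁻¹ * w
      ∈ XS i s := by
  set v : FreeGroup (Fin 2) := (FreeGroup.of 0 ^ (i+1))⁻¹ * w with hv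
  have hvh : ∀ t, v.toWord ≠ ((1 : Fin 2), !s) :: t := by
    intro t ht
    apply hw
    have hw' : w = FreeGroup.of 0 ^ (i+1) * v := by rw [hv]; group
    have hww : w.toWord = List.replicate (i+1) ((0:Fin 2), true) ++ v.toWord := by
      rw [hw']
      apply toWord_pow_mul
      intro t' ht'
      rw [ht] at ht'
      simp at ht'
    rw [hww, ht, P]
    exact ⟨t, by simp⟩
  have hbv : (FreeGroup.mk [((1 : Fin 2), s)] * v).toWord = ((1:Fin 2), s) :: v.toWord :=
    toWord_cons_mul _ _ _ hvh
  have hrw : FreeGroup.of 0 ^ (i+1) * FreeGroup.mk [((1 : Fin 2), s)] * (FreeGroup.of 0 ^ (i+1))⁻¹ * w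
      = FreeGroup.of 0 ^ (i+1) * (FreeGroup.mk [((1 : Fin 2), s)] * v) := by
    rw [hv]; group
  rw [hrw]
  exact mem_XS_of i s _ _ hbv

/-- The ping-pong generators are free. -/
lemma pp_injective (m : ℕ) [Nontrivial (Fin m)] :
    Function.Injective (FreeGroup.lift (fun i : Fin m =>
      FreeGroup.of (0 : Fin 2) ^ ((i : ℕ)+1) * FreeGroup.of 1 * (FreeGroup.of 0 ^ ((i : ℕ)+1))⁻¹)) := by
  apply FreeGroup.injective_lift_of_ping_pong _ (fun i : Fin m => XS i true) (fun i => XS i false)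
  · -- nonempty
    intro i
    refine ⟨FreeGroup.of 0 ^ ((i:ℕ)+1) * FreeGroup.of 1, ?_⟩
    have := mem_XS_of i true (FreeGroup.of 1) [] (FreeGroup.toWord_of 1)
    exact this
  · intro i j hij
    exact XS_disjoint (by simp [Prod.ext_iff]; intro h; exact hij (Fin.val_injective h))
  · intro i j hij
    exact XS_disjoint (by simp [Prod.ext_iff]; intro h; exact hij (Fin.val_injective h))
  · intro i j
    exact XS_disjoint (by simp [Prod.ext_iff])
  · -- hX
    intro i
    rintro _ ⟨w, hw, rfl⟩
    simp only [smul_eq_mul]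
    have := pp_step i true w (by simpa [XS] using hw)
    simpa [of_eq_mk] using this
  · -- hY
    intro i
    rintro _ ⟨w, hw, rfl⟩
    simp only [Pi.inv_apply, smul_eq_mul]
    have := pp_step i false w (by simpa [XS] using hw)
    have hinv : (FreeGroup.of (0:Fin 2) ^ ((i:ℕ)+1) * FreeGroup.of 1 * (FreeGroup.of 0 ^ ((i:ℕ)+1))⁻¹)⁻¹
        = FreeGroup.of 0 ^ ((i:ℕ)+1) * FreeGroup.mk [((1 : Fin 2), false)] * (FreeGroup.of 0 ^ ((i:ℕ)+1))⁻¹ := by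
      rw [← inv_of_eq_mk]; group
    rw [hinv]
    exact this

/-- Key no-law statement. -/
lemma exists_lift_ne_one {n : ℕ} (w : FreeGroup (Fin n)) (hw : w ≠ 1) :
    ∃ c : Fin n → FreeGroup (Fin 2), FreeGroup.lift c w ≠ 1 := by
  rcases Nat.eq_zero_or_pos n with rfl | hn
  · exfalso
    apply hw
    have : w.toWord = [] := by
      cases hL : w.toWord with
      | nil => rfl
      | cons hd tl => exact (hd.1).elim0
    exact FreeGroup.toWord_eq_nil_iff.mp this
  · -- embed into Fin (n+2)
    set f : Fin n → Fin (n+2) := Fin.castLE (by omega) with hf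
    have hfinj : Function.Injective (FreeGroup.map f) := by
      set g : Fin (n+2) → Fin n := fun j => if h : (j : ℕ) < n then ⟨j, h⟩ else ⟨0, hn⟩ with hg
      have hgf : ∀ x, FreeGroup.map g (FreeGroup.map f x) = x := by
        intro x
        rw [FreeGroup.map.comp]
        have : (g ∘ f) = id := by
          funext i
          simp [hg, hf, Fin.castLE, i.isLt]
        rw [this, FreeGroup.map.id]
      intro x y hxy
      rw [← hgf x, ← hgf y, hxy]
    set a : Fin (n+2) → FreeGroup (Fin 2) := fun i =>
      FreeGroup.of (0 : Fin 2) ^ ((i : ℕ)+1) * FreeGroup.of 1 * (FreeGroup.of 0 ^ ((i : ℕ)+1))⁻¹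
      with ha
    have hainj : Function.Injective (FreeGroup.lift a) := pp_injective (n+2)
    refine ⟨a ∘ f, ?_⟩
    have hcomp : (FreeGroup.lift (a ∘ f)) w = FreeGroup.lift a (FreeGroup.map f w) := by
      rw [FreeGroup.map_eq_lift]
      have : (FreeGroup.lift (a ∘ f)) = (FreeGroup.lift a).comp (FreeGroup.lift (FreeGroup.of ∘ f)) := by
        ext i
        simp
      rw [this]
      rfl
    rw [hcomp]
    intro hone
    have h2 : FreeGroup.map f w = 1 :=
      hainj (by rw [hone]; exact ((FreeGroup.lift a).map_one).symm)
    exact hw (hfinj (by rw [h2]; exact ((FreeGroup.map f).map_one).symm))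

end PPAux

section Aux
open MeasureTheory

namespace ProbFreeAux

variable {Γ : Type u} [Group Γ]

/-- Projection from the profinite completion to a finite quotient. -/
def piN (N : FinIndexNormal Γ) : ProfiniteCompletionGrp Γ →* Γ ⧸ N.1 :=
  (Pi.evalMonoidHom (fun N : FinIndexNormal Γ => Γ ⧸ N.1) N).comp (ProfiniteCompletion Γ).subtype

lemma continuous_piN (N : FinIndexNormal Γ) : Continuous (piN (Γ := Γ) N) :=
  (continuous_apply N).comp continuous_subtype_val

lemma surjective_piN (N : FinIndexNormal Γ) : Function.Surjective (piN (Γ := Γ) N) := by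
  intro q
  obtain ⟨γ, rfl⟩ := QuotientGroup.mk_surjective q
  exact ⟨⟨toProfComp Γ γ, Subgroup.le_topologicalClosure _ (MonoidHom.mem_range.mpr ⟨γ, rfl⟩)⟩, rfl⟩

lemma measurableSet_fiber (N : FinIndexNormal Γ) (q : Γ ⧸ N.1) :
    MeasurableSet (piN (Γ := Γ) N ⁻¹' {q}) :=
  ((isOpen_discrete {q}).preimage (continuous_piN N)).measurableSet

lemma measure_fiber (μ : Measure (ProfiniteCompletionGrp Γ)) [μ.IsHaarMeasure]
    [IsProbabilityMeasure μ] (N : FinIndexNormal Γ) (q : Γ ⧸ N.1) :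
    μ (piN (Γ := Γ) N ⁻¹' {q}) = (Nat.card (Γ ⧸ N.1) : ENNReal)⁻¹ := by
  classical
  haveI : Fintype (Γ ⧸ N.1) := Fintype.ofFinite _
  have htrans : ∀ q' : Γ ⧸ N.1, μ (piN (Γ := Γ) N ⁻¹' {q'}) = μ (piN (Γ := Γ) N ⁻¹' {1}) := by
    intro q'
    obtain ⟨x₀, hx₀⟩ := surjective_piN N q'
    have hpre : (fun y => x₀ * y) ⁻¹' (piN (Γ := Γ) N ⁻¹' {q'}) = piN (Γ := Γ) N ⁻¹' {1} := by
      ext y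
      simp only [Set.mem_preimage, Set.mem_singleton_iff, map_mul, hx₀]
      exact mul_eq_left
    rw [← hpre, measure_preimage_mul]
  have hunion : (⋃ q' : Γ ⧸ N.1, piN (Γ := Γ) N ⁻¹' {q'}) = Set.univ := by
    ext x
    simp
  have hdisj : Pairwise (Function.onFun Disjoint fun q' : Γ ⧸ N.1 => piN (Γ := Γ) N ⁻¹' {q'}) := by
    intro q1 q2 hne
    rw [Function.onFun, Set.disjoint_left]
    intro x hx1 hx2
    simp only [Set.mem_preimage, Set.mem_singleton_iff] at hx1 hx2
    exact hne (hx1 ▸ hx2 ▸ rfl)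
  have hsum : (Fintype.card (Γ ⧸ N.1) : ENNReal) * μ (piN (Γ := Γ) N ⁻¹' {1}) = 1 := by
    have h1 := measure_iUnion (μ := μ) hdisj (fun q' => measurableSet_fiber N q')
    rw [hunion, measure_univ, tsum_fintype] at h1
    simp only [htrans] at h1
    rw [Finset.sum_const, Finset.card_univ, nsmul_eq_mul] at h1
    exact h1.symm
  have hc0 : (Fintype.card (Γ ⧸ N.1) : ENNReal) ≠ 0 := by
    simp [Fintype.card_ne_zero]
  have hctop : (Fintype.card (Γ ⧸ N.1) : ENNReal) ≠ ⊤ := by simp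
  have hval : μ (piN (Γ := Γ) N ⁻¹' {1}) = (Fintype.card (Γ ⧸ N.1) : ENNReal)⁻¹ := by
    calc μ (piN (Γ := Γ) N ⁻¹' {1})
        = (Fintype.card (Γ ⧸ N.1) : ENNReal)⁻¹ *
          ((Fintype.card (Γ ⧸ N.1) : ENNReal) * μ (piN (Γ := Γ) N ⁻¹' {1})) := by
          rw [← mul_assoc, ENNReal.inv_mul_cancel hc0 hctop, one_mul]
      _ = (Fintype.card (Γ ⧸ N.1) : ENNReal)⁻¹ := by rw [hsum, mul_one]
  rw [htrans q, hval, Nat.card_eq_fintype_card]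

lemma measure_word_le (μ : Measure (ProfiniteCompletionGrp Γ)) [μ.IsHaarMeasure]
    [IsProbabilityMeasure μ] (N : FinIndexNormal Γ) {n : ℕ} (w : FreeGroup (Fin n)) :
    Measure.pi (fun _ : Fin n => μ)
        {g : Fin n → ProfiniteCompletionGrp Γ | FreeGroup.lift g w = 1}
      ≤ ENNReal.ofReal (wordProb (Γ ⧸ N.1) w) := by
  classical
  haveI : Fintype (Γ ⧸ N.1) := Fintype.ofFinite _
  set Q := Γ ⧸ N.1 with hQ
  set ZQ : Finset (Fin n → Q) := Finset.univ.filter (fun h => FreeGroup.lift h w = 1) with hZQ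
  have hsub : {g : Fin n → ProfiniteCompletionGrp Γ | FreeGroup.lift g w = 1}
      ⊆ ⋃ h ∈ ZQ, Set.pi Set.univ (fun i => piN (Γ := Γ) N ⁻¹' {h i}) := by
    intro g hg
    simp only [Set.mem_setOf_eq] at hg
    have hcomp : (piN (Γ := Γ) N).comp (FreeGroup.lift g)
        = FreeGroup.lift (fun i => piN (Γ := Γ) N (g i)) := by
      ext i
      simp
    have hmem : FreeGroup.lift (fun i => piN (Γ := Γ) N (g i)) w = 1 := by
      rw [← hcomp]
      simp [MonoidHom.comp_apply, hg]
    refine Set.mem_biUnion (x := fun i => piN (Γ := Γ) N (g i)) ?_ ?_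
    · exact Finset.mem_filter.mpr ⟨Finset.mem_univ _, hmem⟩
    · intro i _
      simp
  calc Measure.pi (fun _ : Fin n => μ) {g : Fin n → ProfiniteCompletionGrp Γ | FreeGroup.lift g w = 1}
      ≤ Measure.pi (fun _ : Fin n => μ)
          (⋃ h ∈ ZQ, Set.pi Set.univ (fun i => piN (Γ := Γ) N ⁻¹' {h i})) := measure_mono hsub
    _ ≤ ∑ h ∈ ZQ, Measure.pi (fun _ : Fin n => μ)
          (Set.pi Set.univ (fun i => piN (Γ := Γ) N ⁻¹' {h i})) := measure_biUnion_finset_le _ _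
    _ = ∑ h ∈ ZQ, ∏ i : Fin n, μ (piN (Γ := Γ) N ⁻¹' {h i}) := by
          refine Finset.sum_congr rfl fun h _ => ?_
          exact Measure.pi_pi _ _
    _ = ∑ h ∈ ZQ, ∏ _i : Fin n, (Nat.card Q : ENNReal)⁻¹ := by
          refine Finset.sum_congr rfl fun h _ => Finset.prod_congr rfl fun i _ => ?_
          exact measure_fiber μ N (h i)
    _ = (ZQ.card : ENNReal) * ((Nat.card Q : ENNReal)⁻¹) ^ n := by
          rw [Finset.sum_const, Finset.prod_const, nsmul_eq_mul]
          simp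
    _ = ENNReal.ofReal (wordProb Q w) := by
          have hcard : Nat.card {h : Fin n → Q // FreeGroup.lift h w = 1} = ZQ.card := by
            rw [Nat.card_eq_fintype_card, Fintype.card_subtype]
          have hq0 : (0:ℝ) < (Nat.card Q : ℝ) ^ n := by
            have : 0 < Nat.card Q := Nat.card_pos
            positivity
          rw [wordProb, ENNReal.ofReal_div_of_pos hq0, hcard]
          rw [ENNReal.ofReal_natCast, ENNReal.ofReal_pow (by positivity), ENNReal.ofReal_natCast]
          rw [ENNReal.div_eq_inv_mul, ENNReal.inv_pow, mul_comm]

end ProbFreeAux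

end Aux
namespace ProbFreeAux
open MeasureTheory

lemma measure_word_zero {Γ : Type u} [Group Γ] (μ : Measure (ProfiniteCompletionGrp Γ))
    [μ.IsHaarMeasure] [IsProbabilityMeasure μ] {n : ℕ} (w : FreeGroup (Fin n))
    (hcond : ∀ ε : ℝ, 0 < ε →
      ∃ (N : Subgroup Γ) (_ : N.Normal) (_ : N.FiniteIndex), wordProb (Γ ⧸ N) w < ε) :
    Measure.pi (fun _ : Fin n => μ)
      {g : Fin n → ProfiniteCompletionGrp Γ | FreeGroup.lift g w = 1} = 0 := by
  set x := Measure.pi (fun _ : Fin n => μ)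
      {g : Fin n → ProfiniteCompletionGrp Γ | FreeGroup.lift g w = 1} with hx
  have hle : ∀ ε : ℝ, 0 < ε → x ≤ ENNReal.ofReal ε := by
    intro ε hε
    obtain ⟨N, hN1, hN2, hN3⟩ := hcond ε hε
    have h1 := measure_word_le μ (⟨N, hN1, hN2⟩ : FinIndexNormal Γ) w
    exact h1.trans (ENNReal.ofReal_le_ofReal hN3.le)
  by_contra hxne
  have hxtop : x ≠ ⊤ := by
    intro h
    have := hle 1 one_pos
    rw [h] at this
    exact (ENNReal.ofReal_lt_top.trans_le this).false
  have hxpos : 0 < x.toReal := ENNReal.toReal_pos hxne hxtop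
  have h2 := hle (x.toReal / 2) (by linarith)
  have h3 : ENNReal.ofReal (x.toReal / 2) < x := by
    conv_rhs => rw [← ENNReal.ofReal_toReal hxtop]
    rw [ENNReal.ofReal_lt_ofReal_iff hxpos]
    linarith
  exact (h2.trans_lt h3).false

lemma randomlyFree_of_not_satisfies {Γ : Type u} [Group Γ] [Group.FG Γ]
    (hProblem1 : ∀ (Δ : Type u) [Group Δ], Group.FG Δ → IsResiduallyFinite Δ →
      (∃ (n : ℕ) (w : FreeGroup (Fin n)), IsProbabilisticIdentity Δ w) →
      SatisfiesIdentity Δ)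
    (hrf : IsResiduallyFinite Γ) (hno : ¬ SatisfiesIdentity Γ) : RandomlyFree Γ := by
  intro μ hHaar hProb n _hn
  haveI := hHaar
  haveI := hProb
  classical
  have hnp : ∀ (m : ℕ) (w : FreeGroup (Fin m)), w ≠ 1 → ∀ ε : ℝ, 0 < ε →
      ∃ (N : Subgroup Γ) (_ : N.Normal) (_ : N.FiniteIndex), wordProb (Γ ⧸ N) w < ε := by
    intro m w hw ε hε
    by_contra hcon
    push_neg at hcon
    refine hno (hProblem1 Γ ‹Group.FG Γ› hrf ⟨m, w, hw, ε, hε, ?_⟩)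
    intro N hN hfi
    exact hcon N hN hfi
  set S := {g : Fin n → ProfiniteCompletionGrp Γ |
      Function.Injective ⇑(FreeGroup.lift g : FreeGroup (Fin n) →* ProfiniteCompletionGrp Γ)}
    with hS
  haveI : Countable (FreeGroup (Fin n)) := FreeGroup.toWord_injective.countable
  have hScompl : Sᶜ ⊆ ⋃ (w : {w : FreeGroup (Fin n) // w ≠ 1}),
      {g : Fin n → ProfiniteCompletionGrp Γ | FreeGroup.lift g w.1 = 1} := by
    intro g hg
    simp only [hS, Set.mem_compl_iff, Set.mem_setOf_eq] at hg
    rw [injective_iff_map_eq_one] at hg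
    push_neg at hg
    obtain ⟨w, hw1, hw2⟩ := hg
    exact Set.mem_iUnion.mpr ⟨⟨w, hw2⟩, hw1⟩
  have hnull : Measure.pi (fun _ : Fin n => μ) Sᶜ = 0 :=
    measure_mono_null hScompl (measure_iUnion_null fun w =>
      measure_word_zero μ w.1 (fun ε hε => hnp n w.1 w.2 ε hε))
  haveI : IsProbabilityMeasure (Measure.pi (fun _ : Fin n => μ)) := inferInstance
  refine le_antisymm prob_le_one ?_
  calc (1 : ENNReal) = Measure.pi (fun _ : Fin n => μ) Set.univ := measure_univ.symm
    _ ≤ Measure.pi (fun _ : Fin n => μ) S + Measure.pi (fun _ : Fin n => μ) Sᶜ := by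
        rw [← Set.union_compl_self S]
        exact measure_union_le _ _
    _ = Measure.pi (fun _ : Fin n => μ) S := by rw [hnull, add_zero]

lemma cont_eval {H : Type*} [Group H] [TopologicalSpace H] [IsTopologicalGroup H] {n : ℕ}
    (w : FreeGroup (Fin n)) :
    Continuous (fun g : Fin n → H => FreeGroup.lift g w) := by
  refine FreeGroup.induction_on
    (C := fun v => Continuous fun g : Fin n → H => FreeGroup.lift g v) w ?_ ?_ ?_ ?_
  · show Continuous fun g : Fin n → H => FreeGroup.lift g 1
    have h : (fun g : Fin n → H => FreeGroup.lift g 1) = fun _ => (1 : H) := by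
      funext g; exact map_one _
    rw [h]; exact continuous_const
  · intro x
    show Continuous fun g : Fin n → H => FreeGroup.lift g (pure x)
    have h : (fun g : Fin n → H => FreeGroup.lift g (pure x)) = fun g => g x := by
      funext g; exact FreeGroup.lift_apply_of
    rw [h]; exact continuous_apply x
  · intro x ih
    show Continuous fun g : Fin n → H => FreeGroup.lift g (pure x)⁻¹
    have h : (fun g : Fin n → H => FreeGroup.lift g (pure x)⁻¹)
        = fun g => (FreeGroup.lift g (pure x))⁻¹ := by
      funext g; exact map_inv _ _
    rw [h]; exact ih.inv
  · intro v1 v2 ih1 ih2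
    show Continuous fun g : Fin n → H => FreeGroup.lift g (v1 * v2)
    have h : (fun g : Fin n → H => FreeGroup.lift g (v1 * v2))
        = fun g => (FreeGroup.lift g v1) * (FreeGroup.lift g v2) := by
      funext g; exact map_mul _ _ _
    rw [h]; exact ih1.mul ih2

lemma completion_satisfies {Γ : Type u} [Group Γ] (hsat : SatisfiesIdentity Γ) :
    ∃ (n : ℕ) (w : FreeGroup (Fin n)), w ≠ 1 ∧
      ∀ g : Fin n → ProfiniteCompletionGrp Γ, FreeGroup.lift g w = 1 := by
  obtain ⟨n, w, hw1, hall⟩ := hsat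
  refine ⟨n, w, hw1, ?_⟩
  set D : Set (ProfiniteCompletionGrp Γ) :=
    Subtype.val ⁻¹' (((toProfComp Γ).range : Subgroup (ProfCompAmbient Γ)) :
      Set (ProfCompAmbient Γ)) with hD
  have hDdense : Dense D := by
    rw [dense_iff_closure_eq, hD,
      Topology.IsEmbedding.subtypeVal.closure_eq_preimage_closure_image,
      Set.image_preimage_eq_inter_range, Subtype.range_coe]
    have hsub : (((toProfComp Γ).range : Subgroup (ProfCompAmbient Γ)) :
        Set (ProfCompAmbient Γ)) ∩ (ProfiniteCompletion Γ : Set (ProfCompAmbient Γ))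
        = (((toProfComp Γ).range : Subgroup (ProfCompAmbient Γ)) : Set (ProfCompAmbient Γ)) :=
      Set.inter_eq_left.mpr (Subgroup.le_topologicalClosure _)
    rw [hsub]
    have hclos : closure (((toProfComp Γ).range : Subgroup (ProfCompAmbient Γ)) :
        Set (ProfCompAmbient Γ)) = (ProfiniteCompletion Γ : Set (ProfCompAmbient Γ)) :=
      (Subgroup.topologicalClosure_coe (s := (toProfComp Γ).range)).symm
    rw [hclos]
    ext x
    simp [x.2]
  have hcont : Continuous (fun g : Fin n → ProfiniteCompletionGrp Γ => FreeGroup.lift g w) :=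
    cont_eval w
  have heq : Set.EqOn (fun g : Fin n → ProfiniteCompletionGrp Γ => FreeGroup.lift g w)
      (fun _ => 1) (Set.pi Set.univ (fun _ : Fin n => D)) := by
    intro g hg
    choose γ hγ using fun i => hg i (Set.mem_univ i)
    have h1 : ((ProfiniteCompletion Γ).subtype).comp (FreeGroup.lift g)
        = FreeGroup.lift (fun i => ((g i : ProfCompAmbient Γ))) := by
      ext i
      simp
    have h2 : (toProfComp Γ).comp (FreeGroup.lift γ)
        = FreeGroup.lift (fun i => toProfComp Γ (γ i)) := by
      ext i
      simp
    have hval : ((FreeGroup.lift g w : ProfiniteCompletionGrp Γ) : ProfCompAmbient Γ) = 1 := by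
      have e1 : ((FreeGroup.lift g w : ProfiniteCompletionGrp Γ) : ProfCompAmbient Γ)
          = FreeGroup.lift (fun i => ((g i : ProfCompAmbient Γ))) w := by
        rw [← h1]; rfl
      rw [e1]
      have e2 : (fun i => ((g i : ProfCompAmbient Γ))) = fun i => toProfComp Γ (γ i) := by
        funext i
        exact (hγ i).symm
      rw [e2, ← h2, MonoidHom.comp_apply, hall γ, map_one]
    exact Subtype.ext hval
  intro g
  have hclosed := heq.closure hcont continuous_const
  have hmem : g ∈ closure (Set.pi Set.univ (fun _ : Fin n => D)) := by
    rw [(dense_pi Set.univ (fun i _ => hDdense)).closure_eq]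
    trivial
  exact hclosed hmem

end ProbFreeAux


/-- Assuming a positive answer to Problem 1 (every finitely generated residually finite
group satisfying a probabilistic identity satisfies an identity), every finitely
generated residually finite group `Γ` either satisfies an identity or is randomly free.
In particular, (i) if `Γ` satisfies no identity then its profinite completion has a
nonabelian free subgroup, and (ii) if its profinite completion has a nonabelian free
subgroup then almost all `n`-tuples freely generate a free subgroup of rank `n`. -/
theorem identity_or_randomly_free
    (hProblem1 : ∀ (Δ : Type u) [Group Δ], Group.FG Δ → IsResiduallyFinite Δ →
      (∃ (n : ℕ) (w : FreeGroup (Fin n)), IsProbabilisticIdentity Δ w) →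
      SatisfiesIdentity Δ)
    [Group.FG Γ] (hrf : IsResiduallyFinite Γ) :
    (SatisfiesIdentity Γ ∨ RandomlyFree Γ) ∧
    (¬ SatisfiesIdentity Γ →
      ∃ g : Fin 2 → ProfiniteCompletionGrp Γ,
        Function.Injective ⇑(FreeGroup.lift g : FreeGroup (Fin 2) →* ProfiniteCompletionGrp Γ)) ∧
    ((∃ g : Fin 2 → ProfiniteCompletionGrp Γ,
        Function.Injective ⇑(FreeGroup.lift g : FreeGroup (Fin 2) →* ProfiniteCompletionGrp Γ)) →
      RandomlyFree Γ) := by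
  classical
  have hRF : ¬ SatisfiesIdentity Γ → RandomlyFree Γ := fun hno =>
    ProbFreeAux.randomlyFree_of_not_satisfies hProblem1 hrf hno
  have hNoPair : SatisfiesIdentity Γ →
      ¬ ∃ g : Fin 2 → ProfiniteCompletionGrp Γ,
        Function.Injective ⇑(FreeGroup.lift g : FreeGroup (Fin 2) →* ProfiniteCompletionGrp Γ) := by
    rintro hsat ⟨g2, hinj⟩
    obtain ⟨n, w, hw1, hall⟩ := ProbFreeAux.completion_satisfies hsat
    obtain ⟨c, hc⟩ := PPAux.exists_lift_ne_one w hw1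
    apply hc
    apply hinj
    have hcomp : (FreeGroup.lift g2).comp (FreeGroup.lift c)
        = FreeGroup.lift (fun i => FreeGroup.lift g2 (c i)) := by
      ext i
      simp
    have h1 := hall (fun i => FreeGroup.lift g2 (c i))
    rw [← hcomp, MonoidHom.comp_apply] at h1
    rw [h1, map_one]
  have hPair : ¬ SatisfiesIdentity Γ →
      ∃ g : Fin 2 → ProfiniteCompletionGrp Γ,
        Function.Injective ⇑(FreeGroup.lift g : FreeGroup (Fin 2) →* ProfiniteCompletionGrp Γ) := by
    intro hno
    have hrf2 := hRF hno
    haveI : Nonempty (ProfiniteCompletionGrp Γ) := ⟨1⟩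
    set μ := MeasureTheory.Measure.haarMeasure
      (⊤ : TopologicalSpace.PositiveCompacts (ProfiniteCompletionGrp Γ)) with hμ
    haveI hH : μ.IsHaarMeasure := MeasureTheory.Measure.isHaarMeasure_haarMeasure _
    haveI hP : MeasureTheory.IsProbabilityMeasure μ := ⟨by
      rw [← TopologicalSpace.PositiveCompacts.coe_top (α := ProfiniteCompletionGrp Γ)]
      exact MeasureTheory.Measure.haarMeasure_self⟩
    have h1 := hrf2 μ hH hP 2 (by norm_num)
    have hne : MeasureTheory.Measure.pi (fun _ : Fin 2 => μ)
        {g : Fin 2 → ProfiniteCompletionGrp Γ |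
          Function.Injective ⇑(FreeGroup.lift g : FreeGroup (Fin 2) →* ProfiniteCompletionGrp Γ)}
        ≠ 0 := by
      rw [h1]
      exact one_ne_zero
    obtain ⟨g, hg⟩ := MeasureTheory.nonempty_of_measure_ne_zero hne
    exact ⟨g, hg⟩
  refine ⟨?_, hPair, ?_⟩
  · by_cases h : SatisfiesIdentity Γ
    · exact Or.inl h
    · exact Or.inr (hRF h)
  · intro hp
    by_cases h : SatisfiesIdentity Γ
    · exact absurd hp (hNoPair h)
    · exact hRF h

end PPAuxSec
end

section
/- Assume the following: for every nontrivial word w ∈ F_n, every positive integer d, and every ε > 0, there exists a nontrivial word v ∈ F_m (for some m) such that every finite d-generated group G with P_G(w) ≥ ε satisfies the identity v. Let n ≥ 2 be an integer, p a prime, and X a set of n-generated finite p-groups. Then the free group F_n is residually X if and only if the groups in X do not satisfy a common nontrivial identity. -/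
/-- Any partial injection on a finite type extends to a permutation. -/
lemma exists_perm_extend {α : Type*} [Fintype α] [DecidableEq α] (s : Finset α) (f : α → α)
    (hinj : Set.InjOn f s) : ∃ e : Equiv.Perm α, ∀ x ∈ s, e x = f x := by
  classical
  set u := s.image f with hu
  have hcard : u.card = s.card := Finset.card_image_of_injOn hinj
  have hcc : Fintype.card ↥(sᶜ : Finset α) = Fintype.card ↥(uᶜ : Finset α) := by
    simp [Finset.card_compl, hcard]
  let e' : ↥(sᶜ : Finset α) ≃ ↥(uᶜ : Finset α) := Fintype.equivOfCardEq hcc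
  let g : α → α := fun x => if hx : x ∈ s then f x else (e' ⟨x, by simpa using hx⟩ : α)
  have hg : ∀ x ∈ s, g x = f x := fun x hx => dif_pos hx
  have hgmem : ∀ x (hx : x ∉ s), g x ∉ u := by
    intro x hx
    have : g x = (e' ⟨x, by simpa using hx⟩ : α) := dif_neg hx
    rw [this]
    exact Finset.mem_compl.mp (e' ⟨x, by simpa using hx⟩).2
  have hginj : Function.Injective g := by
    intro x y hxy
    by_cases hx : x ∈ s <;> by_cases hy : y ∈ s
    · rw [hg x hx, hg y hy] at hxy; exact hinj hx hy hxy
    · exact absurd (by rw [← hxy, hg x hx]; exact Finset.mem_image_of_mem f hx) (hgmem y hy)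
    · exact absurd (by rw [hxy, hg y hy]; exact Finset.mem_image_of_mem f hy) (hgmem x hx)
    · have hx' : g x = (e' ⟨x, by simpa using hx⟩ : α) := dif_neg hx
      have hy' : g y = (e' ⟨y, by simpa using hy⟩ : α) := dif_neg hy
      rw [hx', hy'] at hxy
      have := e'.injective (Subtype.ext hxy)
      simpa using congrArg Subtype.val this
  exact ⟨Equiv.ofBijective g (Finite.injective_iff_bijective.mp hginj), hg⟩

/-- For any nontrivial word `v` there are permutations of a finite set at which `v`
evaluates nontrivially. -/
lemma exists_perm_eval_ne_one {m : ℕ} (v : FreeGroup (Fin m)) (hv : v ≠ 1) :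
    ∃ (N : ℕ) (σ : Fin m → Equiv.Perm (Fin (N + 2))), FreeGroup.lift σ v ≠ 1 := by
  classical
  set L := v.toWord with hLdef
  have hLred : FreeGroup.reduce L = L := v.reduce_toWord
  have hLne : L ≠ [] := by simpa [hLdef, FreeGroup.toWord_eq_nil_iff] using hv
  have hlpos : 0 < L.length := List.length_pos_iff.mpr hLne
  obtain ⟨N, hN⟩ : ∃ N, L.length = N + 1 := ⟨L.length - 1, by omega⟩
  set l := L.length with hldef
  -- helper for index transport
  have getL : ∀ (i i' : ℕ) (h : i = i') (hi : i < l), L[i]'hi = L[i']'(h ▸ hi) := by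
    intro i i' h hi; subst h; rfl
  -- reducedness: no adjacent inverse pair
  have hred : ∀ (k : ℕ) (h : k + 1 < l),
      ¬ ((L[k+1]'h).1 = (L[k]'(by omega)).1 ∧ (L[k+1]'h).2 = ! (L[k]'(by omega)).2) := by
    rintro k h ⟨h1, h2⟩
    refine FreeGroup.reduce.not (p := False) (L₁ := L) (L₂ := L.take k)
      (L₃ := L.drop (k+2)) (x := (L[k]'(by omega)).1) (b := (L[k]'(by omega)).2) ?_
    rw [hLred]
    conv_lhs => rw [← List.take_append_drop k L]
    congr 1
    have e2 : L[k+1]'h = ((L[k]'(by omega)).1, !(L[k]'(by omega)).2) :=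
      Prod.ext_iff.mpr ⟨h1, h2⟩
    rw [List.drop_eq_getElem_cons (show k < L.length by omega),
      List.drop_eq_getElem_cons (show k + 1 < L.length from h), e2]
  -- the constraints
  have hbound1 : ∀ t : ℕ, t < l → l - 1 - t < l := by omega
  have hbound2 : ∀ t : ℕ, 0 < t → t ≤ l → l - t < l := by omega
  let C1 : ℕ → Fin m → Prop := fun t j => ∃ h : t < l, L[l-1-t]'(hbound1 t h) = (j, true)
  let C2 : ℕ → Fin m → Prop := fun t j =>
    ∃ h : 0 < t ∧ t ≤ l, L[l-t]'(hbound2 t h.1 h.2) = (j, false)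
  -- the partial map
  let fj : Fin m → Fin (N+2) → Fin (N+2) := fun j x =>
    if h : C1 x.val j then ⟨x.val + 1, by obtain ⟨h', _⟩ := h; omega⟩
    else if h : C2 x.val j then ⟨x.val - 1, by omega⟩
    else x
  let sj : Fin m → Finset (Fin (N+2)) := fun j =>
    Finset.univ.filter (fun x => C1 x.val j ∨ C2 x.val j)
  have hinj : ∀ j, Set.InjOn (fj j) (sj j) := by
    intro j x hx y hy hxy
    simp only [sj, Finset.coe_filter, Set.mem_setOf_eq, Finset.mem_univ, true_and] at hx hy
    have hfx : ∀ z : Fin (N+2), (C1 z.val j ∨ C2 z.val j) →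
        (C1 z.val j ∧ (fj j z).val = z.val + 1) ∨
        (¬ C1 z.val j ∧ C2 z.val j ∧ (fj j z).val = z.val - 1) := by
      intro z hz
      by_cases h1 : C1 z.val j
      · exact Or.inl ⟨h1, by simp only [fj, dif_pos h1]⟩
      · rcases hz with h | h
        · exact absurd h h1
        · exact Or.inr ⟨h1, h, by simp only [fj, dif_neg h1, dif_pos h]⟩
    have hvx := hfx x hx
    have hvy := hfx y hy
    have hval : (fj j x).val = (fj j y).val := by rw [hxy]
    apply Fin.ext
    rcases hvx with ⟨hc1x, hex⟩ | ⟨hn1x, hc2x, hex⟩ <;>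
      rcases hvy with ⟨hc1y, hey⟩ | ⟨hn1y, hc2y, hey⟩
    · obtain ⟨hxl, _⟩ := hc1x; obtain ⟨hyl, _⟩ := hc1y; omega
    · -- x ascending, y descending : x+1 = y-1, so y = x+2
      exfalso
      obtain ⟨hxl, hexx⟩ := hc1x
      obtain ⟨⟨hy0, hyl⟩, heyy⟩ := hc2y
      have hyx : y.val = x.val + 2 := by omega
      have hk : (l - y.val) + 1 < l := by omega
      refine hred (l - y.val) hk ?_
      rw [getL (l - y.val + 1) (l - 1 - x.val) (by omega) hk]
      rw [heyy, hexx]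
      exact ⟨rfl, rfl⟩
    · exfalso
      obtain ⟨hyl, heyy⟩ := hc1y
      obtain ⟨⟨hx0, hxl⟩, hexx⟩ := hc2x
      have hxy2 : x.val = y.val + 2 := by omega
      have hk : (l - x.val) + 1 < l := by omega
      refine hred (l - x.val) hk ?_
      rw [getL (l - x.val + 1) (l - 1 - y.val) (by omega) hk]
      rw [hexx, heyy]
      exact ⟨rfl, rfl⟩
    · obtain ⟨⟨hx0, _⟩, _⟩ := hc2x
      obtain ⟨⟨hy0, _⟩, _⟩ := hc2y
      omega
  -- extend to permutations
  choose σ hσ using fun j => exists_perm_extend (sj j) (fj j) (hinj j)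
  have hmem : ∀ (j : Fin m) (x : Fin (N+2)), (C1 x.val j ∨ C2 x.val j) → x ∈ sj j := by
    intro j x hx
    simp only [sj, Finset.mem_filter, Finset.mem_univ, true_and]
    exact hx
  have hvalmk : ∀ (a : ℕ) (h : a < N+2), ((⟨a, h⟩ : Fin (N+2))).val = a := fun _ _ => rfl
  have hA : ∀ (t : ℕ) (h : t < l) (j : Fin m), L[l-1-t]'(hbound1 t h) = (j, true) →
      σ j ⟨t, by omega⟩ = ⟨t + 1, by omega⟩ := by
    intro t h j he
    have hc1 : C1 t j := ⟨h, he⟩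
    have := hσ j ⟨t, by omega⟩ (hmem j _ (Or.inl hc1))
    rw [this]
    simp only [fj, hvalmk, dif_pos hc1]
  have hB : ∀ (t : ℕ) (h : t < l) (j : Fin m), L[l-1-t]'(hbound1 t h) = (j, false) →
      σ j ⟨t + 1, by omega⟩ = ⟨t, by omega⟩ := by
    intro t h j he
    have hc2 : C2 (t+1) j := ⟨⟨by omega, by omega⟩, by
      rw [getL (l - (t+1)) (l-1-t) (by omega) (by omega)]; exact he⟩
    have hnc1 : ¬ C1 (t+1) j := by
      rintro ⟨h1, he1⟩
      have hk : (l - 1 - (t+1)) + 1 < l := by omega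
      refine hred (l - 1 - (t+1)) hk ?_
      rw [getL (l - 1 - (t+1) + 1) (l - 1 - t) (by omega) hk]
      rw [he, he1]
      exact ⟨rfl, rfl⟩
    have := hσ j ⟨t + 1, by omega⟩ (hmem j _ (Or.inr hc2))
    rw [this]
    simp only [fj, hvalmk, dif_neg hnc1, dif_pos hc2]
    exact Fin.ext (by simp)
  -- the evaluation map on letters
  let Λ : (Fin m × Bool) → Equiv.Perm (Fin (N+2)) := fun x => cond x.2 (σ x.1) (σ x.1)⁻¹
  have key : ∀ (t : ℕ) (ht : t ≤ l),
      ((L.drop (l - t)).map Λ).prod (0 : Fin (N+2)) = ⟨t, by omega⟩ := by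
    intro t
    induction t with
    | zero =>
      intro _
      rw [Nat.sub_zero, List.drop_length]
      simp
    | succ t ih =>
      intro ht
      have htl : t < l := by omega
      have hsl : l - (t+1) < l := by omega
      rw [List.drop_eq_getElem_cons (h := hsl), List.map_cons, List.prod_cons,
        Equiv.Perm.mul_apply, show l - (t+1) + 1 = l - t from by omega, ih (by omega)]
      have hidx : l - (t+1) = l - 1 - t := by omega
      rcases hLk : L[l - (t+1)]'hsl with ⟨j, b⟩
      rw [getL (l - (t+1)) (l - 1 - t) hidx hsl] at hLk
      cases b
      · have hb := hB t htl j hLk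
        have h2 : (σ j).symm ⟨t, by omega⟩ = ⟨t+1, by omega⟩ := by
          rw [← hb, Equiv.symm_apply_apply]
        have : Λ (j, false) = (σ j)⁻¹ := rfl
        rw [this, Equiv.Perm.inv_def]
        convert h2 using 2
      · have ha := hA t htl j hLk
        have : Λ (j, true) = σ j := rfl
        rw [this]
        convert ha using 2
  refine ⟨N, σ, fun hcon => ?_⟩
  have h1 : FreeGroup.lift σ v = (L.map Λ).prod := by
    conv_lhs => rw [← v.mk_toWord]
    rw [FreeGroup.lift_mk]
  have h2 := key l le_rfl
  rw [Nat.sub_self, List.drop_zero, ← h1, hcon] at h2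
  have : (0 : ℕ) = l := by
    simpa using congrArg Fin.val h2
  omega

/-- A nonabelian free group satisfies no law. -/
lemma exists_freeGroup_eval_ne_one {n m : ℕ} (hn : 2 ≤ n) (v : FreeGroup (Fin m)) (hv : v ≠ 1) :
    ∃ u : Fin m → FreeGroup (Fin n), FreeGroup.lift u v ≠ 1 := by
  classical
  obtain ⟨N, σ, hσ⟩ := exists_perm_eval_ne_one v hv
  set c : Equiv.Perm (Fin (N+2)) := finRotate (N+2) with hc
  set τ : Equiv.Perm (Fin (N+2)) := Equiv.swap 0 (c 0) with hτ
  have hclos : Subgroup.closure ({c, τ} : Set (Equiv.Perm (Fin (N+2)))) = ⊤ :=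
    Equiv.Perm.closure_cycle_adjacent_swap (isCycle_finRotate) (support_finRotate) 0
  let q : Fin n → Equiv.Perm (Fin (N+2)) := fun i =>
    if i.val = 0 then c else if i.val = 1 then τ else 1
  have hq : Subgroup.closure (Set.range q) = ⊤ := by
    rw [eq_top_iff, ← hclos]
    apply Subgroup.closure_mono
    rintro x (rfl | rfl)
    · exact ⟨⟨0, by omega⟩, by simp [q]⟩
    · exact ⟨⟨1, by omega⟩, by simp [q]⟩
  have hsurj : Function.Surjective (FreeGroup.lift q) := by
    rw [← MonoidHom.range_eq_top, FreeGroup.range_lift_eq_closure, hq]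
  choose u hu using fun j => hsurj (σ j)
  refine ⟨u, fun hcon => ?_⟩
  have hcomp : (FreeGroup.lift q).comp (FreeGroup.lift u) =
      FreeGroup.lift (fun j => FreeGroup.lift q (u j)) := by
    apply FreeGroup.ext_hom
    intro a
    simp
  apply hσ
  have : FreeGroup.lift σ = FreeGroup.lift (fun j => FreeGroup.lift q (u j)) := by
    congr 1
    funext j
    rw [hu]
  rw [this, ← hcomp]
  simp [hcon]

/-- Any proper subgroup of a finite `p`-group is annihilated by a nontrivial character
into `Multiplicative (ZMod p)`. -/
lemma exists_character_of_ne_top {p : ℕ} (hp : p.Prime) {G : Type*} [Group G] [Finite G]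
    (hG : IsPGroup p G) {H : Subgroup G} (hH : H ≠ ⊤) :
    ∃ χ : G →* Multiplicative (ZMod p), χ ≠ 1 ∧ ∀ g ∈ H, χ g = 1 := by
  classical
  haveI : Fact p.Prime := ⟨hp⟩
  haveI : Finite (Subgroup G) :=
    Finite.of_injective (fun K : Subgroup G => (K : Set G)) SetLike.coe_injective
  -- a maximal subgroup above H
  obtain ⟨M, hM, hHM⟩ := (eq_top_or_exists_le_coatom H).resolve_left hH
  -- maximal subgroups of nilpotent groups are normal
  have hnil : Group.IsNilpotent G := hG.isNilpotent
  have himp := (isNilpotent_of_finite_tfae (G := G)).out 0 2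
  haveI hMnormal : M.Normal := himp.mp hnil M hM
  -- the quotient has no proper nontrivial subgroups
  have hQsub : ∀ K : Subgroup (G ⧸ M), K = ⊥ ∨ K = ⊤ := by
    intro K
    have hle : M ≤ K.comap (QuotientGroup.mk' M) := by
      intro x hx
      have : QuotientGroup.mk' M x = 1 := (QuotientGroup.eq_one_iff x).mpr hx
      simp only [Subgroup.mem_comap, this]
      exact K.one_mem
    rcases eq_or_lt_of_le hle with heq | hlt
    · left
      have : K = Subgroup.map (QuotientGroup.mk' M) (K.comap (QuotientGroup.mk' M)) :=
        (Subgroup.map_comap_eq_self_of_surjective (QuotientGroup.mk'_surjective M) K).symm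
      rw [this, ← heq]
      rw [Subgroup.map_eq_bot_iff, QuotientGroup.ker_mk']
    · right
      have : K = Subgroup.map (QuotientGroup.mk' M) (K.comap (QuotientGroup.mk' M)) :=
        (Subgroup.map_comap_eq_self_of_surjective (QuotientGroup.mk'_surjective M) K).symm
      rw [this, hM.2 _ hlt]
      exact Subgroup.map_top_of_surjective _ (QuotientGroup.mk'_surjective M)
  -- the quotient is nontrivial
  have hQnt : Nontrivial (G ⧸ M) := by
    obtain ⟨x, hx⟩ : ∃ x, x ∉ M := by
      by_contra hcon
      push_neg at hcon
      exact hM.1 (Subgroup.eq_top_iff' M |>.mpr hcon)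
    exact ⟨⟨QuotientGroup.mk' M x, 1, fun hcon => hx ((QuotientGroup.eq_one_iff x).mp hcon)⟩⟩
  -- the quotient is a p-group of order p
  have hQp : IsPGroup p (G ⧸ M) := hG.to_quotient M
  have hcard : Nat.card (G ⧸ M) = p := by
    obtain ⟨e, he0, he⟩ := hQp.nontrivial_iff_card.mp hQnt
    have hdvd : p ∣ Nat.card (G ⧸ M) := by
      rw [he]; exact dvd_pow_self p (by omega)
    obtain ⟨g, hg⟩ := exists_prime_orderOf_dvd_card' p hdvd
    have hgne : g ≠ 1 := by
      intro hcon
      rw [hcon, orderOf_one] at hg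
      exact hp.one_lt.ne' hg.symm
    have hzp : Subgroup.zpowers g = ⊤ := by
      rcases hQsub (Subgroup.zpowers g) with hbot | htop
      · exact absurd (Subgroup.zpowers_eq_bot.mp hbot) hgne
      · exact htop
    calc Nat.card (G ⧸ M) = Nat.card (⊤ : Subgroup (G ⧸ M)) := (Subgroup.card_top).symm
      _ = Nat.card (Subgroup.zpowers g) := by rw [hzp]
      _ = orderOf g := Nat.card_zpowers g
      _ = p := hg
  -- the quotient is cyclic of order p, hence isomorphic to Multiplicative (ZMod p)
  haveI : IsCyclic (G ⧸ M) := isCyclic_of_prime_card hcard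
  have e : Multiplicative (ZMod p) ≃* (G ⧸ M) := hcard ▸ zmodCyclicMulEquiv inferInstance
  refine ⟨e.symm.toMonoidHom.comp (QuotientGroup.mk' M), ?_, ?_⟩
  · intro hcon
    apply hM.1
    rw [Subgroup.eq_top_iff']
    intro x
    have hx : e.symm.toMonoidHom.comp (QuotientGroup.mk' M) x = 1 := by rw [hcon]; rfl
    have h1 : e.symm (QuotientGroup.mk' M x) = 1 := hx
    have h2 : QuotientGroup.mk' M x = 1 := by
      have := congrArg e h1
      simpa using this
    exact (QuotientGroup.eq_one_iff x).mp h2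
  · intro g hg
    have : QuotientGroup.mk' M g = 1 := (QuotientGroup.eq_one_iff g).mpr (hHM hg)
    show e.symm (QuotientGroup.mk' M g) = 1
    rw [this, map_one]

/-- In a finite `p`-group, if the word evaluates to `1` on all generating tuples, then the
word probability is at least `1 / p ^ n`. -/
lemma wordProb_ge {p n : ℕ} (hp : p.Prime) {G : Type*} [Group G] [Finite G]
    (hG : IsPGroup p G) (hgen : ∃ g : Fin n → G, Subgroup.closure (Set.range g) = ⊤)
    (w : FreeGroup (Fin n))
    (hall : ∀ h : Fin n → G, Subgroup.closure (Set.range h) = ⊤ → FreeGroup.lift h w = 1) :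
    (1 : ℝ) / (p : ℝ) ^ n ≤ wordProb G w := by
  classical
  haveI : Fact p.Prime := ⟨hp⟩
  haveI : NeZero p := ⟨hp.ne_zero⟩
  letI : Fintype G := Fintype.ofFinite G
  obtain ⟨g₀, hg₀⟩ := hgen
  set c := Fintype.card G with hc
  have hcpos : 0 < c := Fintype.card_pos
  set T : Finset (Fin n → G) := Finset.univ.filter (fun h => FreeGroup.lift h w = 1) with hT
  set Gen : Finset (Fin n → G) :=
    Finset.univ.filter (fun h => Subgroup.closure (Set.range h) = ⊤) with hGen
  have hGenT : Gen ⊆ T := by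
    intro h hh
    simp only [hGen, Finset.mem_filter, Finset.mem_univ, true_and] at hh
    simp only [hT, Finset.mem_filter, Finset.mem_univ, true_and]
    exact hall h hh
  haveI : Finite (G →* Multiplicative (ZMod p)) :=
    Finite.of_injective (fun f => (f : G → Multiplicative (ZMod p))) DFunLike.coe_injective
  letI : Fintype (G →* Multiplicative (ZMod p)) := Fintype.ofFinite _
  set S : Finset (G →* Multiplicative (ZMod p)) := Finset.univ.filter (fun χ => χ ≠ 1) with hS
  set NGen : Finset (Fin n → G) :=
    Finset.univ.filter (fun h => ¬ Subgroup.closure (Set.range h) = ⊤) with hNGen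
  have hcover : NGen ⊆ S.biUnion
      (fun χ => Finset.univ.filter (fun h : Fin n → G => ∀ j, χ (h j) = 1)) := by
    intro h hh
    simp only [hNGen, Finset.mem_filter, Finset.mem_univ, true_and] at hh
    obtain ⟨χ, hχne, hχ⟩ := exists_character_of_ne_top hp hG hh
    refine Finset.mem_biUnion.mpr ⟨χ, by simp [hS, hχne], ?_⟩
    simp only [Finset.mem_filter, Finset.mem_univ, true_and]
    exact fun j => hχ (h j) (Subgroup.subset_closure (Set.mem_range_self j))
  -- cardinality of Multiplicative (ZMod p)
  have hcardM : Nat.card (Multiplicative (ZMod p)) = p := by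
    rw [Nat.card_eq_fintype_card, Fintype.card_multiplicative, ZMod.card]
  -- each χ in S has kernel of size c / p
  have hker : ∀ χ ∈ S, p * Nat.card χ.ker = c := by
    intro χ hχ
    simp only [hS, Finset.mem_filter, Finset.mem_univ, true_and] at hχ
    haveI : Fact (Nat.card (Multiplicative (ZMod p))).Prime := by rw [hcardM]; exact ⟨hp⟩
    have hrange : χ.range = ⊤ := by
      rcases Subgroup.eq_bot_or_eq_top_of_prime_card χ.range with hbot | htop
      · exfalso
        apply hχ
        ext x
        have : χ x ∈ χ.range := ⟨x, rfl⟩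
        rw [hbot] at this
        simpa using this
      · exact htop
    have hindex : χ.ker.index = p := by
      rw [Subgroup.index_ker, hrange, Subgroup.card_top, hcardM]
    have := Subgroup.index_mul_card χ.ker
    rw [hindex, Nat.card_eq_fintype_card (α := G)] at this
    exact this
  -- each kernel-constrained set has size (Nat.card ker)^n
  have hkerset : ∀ χ : G →* Multiplicative (ZMod p),
      (Finset.univ.filter (fun h : Fin n → G => ∀ j, χ (h j) = 1)).card
        = (Nat.card χ.ker) ^ n := by
    intro χ
    rw [← Fintype.card_subtype]
    have e : {h : Fin n → G // ∀ j, χ (h j) = 1} ≃ (Fin n → χ.ker) :=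
      { toFun := fun h j => ⟨h.1 j, MonoidHom.mem_ker.mpr (h.2 j)⟩
        invFun := fun f => ⟨fun j => (f j : G), fun j => MonoidHom.mem_ker.mp (f j).2⟩
        left_inv := fun h => by ext j; rfl
        right_inv := fun f => by ext j; rfl }
    rw [Fintype.card_congr e, Fintype.card_fun, Fintype.card_fin,
      Nat.card_eq_fintype_card]
  -- S has at most p^n - 1 elements
  have hScard : S.card ≤ p ^ n - 1 := by
    have hmaps : ∀ χ ∈ S, (fun j => χ (g₀ j)) ∈
        Finset.univ.filter (fun t : Fin n → Multiplicative (ZMod p) =>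
          t ≠ fun _ => 1) := by
      intro χ hχ
      simp only [hS, Finset.mem_filter, Finset.mem_univ, true_and] at hχ ⊢
      intro hcon
      apply hχ
      refine MonoidHom.eq_of_eqOn_dense hg₀ ?_
      rintro x ⟨j, rfl⟩
      exact congrFun hcon j
    have hinj : Set.InjOn (fun χ : G →* Multiplicative (ZMod p) => fun j => χ (g₀ j)) S := by
      intro χ₁ h₁ χ₂ h₂ h12
      refine MonoidHom.eq_of_eqOn_dense hg₀ ?_
      rintro x ⟨j, rfl⟩
      exact congrFun h12 j
    have := Finset.card_le_card_of_injOn _ hmaps hinj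
    calc S.card ≤ (Finset.univ.filter (fun t : Fin n → Multiplicative (ZMod p) =>
          t ≠ fun _ => 1)).card := this
      _ = p ^ n - 1 := by
        rw [Finset.filter_ne', Finset.card_erase_of_mem (Finset.mem_univ _),
          Finset.card_univ, Fintype.card_fun, Fintype.card_fin,
          Fintype.card_multiplicative, ZMod.card]
  -- partition
  have hpart : Gen.card + NGen.card = c ^ n := by
    have := Finset.card_filter_add_card_filter_not
      (s := (Finset.univ : Finset (Fin n → G)))
      (p := fun h => Subgroup.closure (Set.range h) = ⊤)
    rw [Finset.card_univ, Fintype.card_fun, Fintype.card_fin] at this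
    exact this
  -- key natural number inequality
  have hkey : c ^ n ≤ p ^ n * T.card := by
    have hTGen : Gen.card ≤ T.card := Finset.card_le_card hGenT
    by_cases hSemp : S = ∅
    · have hNG : NGen.card = 0 := by
        have := Finset.card_le_card hcover
        rw [hSemp] at this
        simpa using this
      have : c ^ n ≤ T.card := by omega
      calc c ^ n ≤ T.card := this
        _ ≤ p ^ n * T.card := Nat.le_mul_of_pos_left _ (pow_pos hp.pos n)
    · obtain ⟨χ₀, hχ₀⟩ := Finset.nonempty_iff_ne_empty.mpr hSemp
      set b := Nat.card χ₀.ker with hb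
      have hpb : p * b = c := hker χ₀ hχ₀
      have hbsame : ∀ χ ∈ S, Nat.card χ.ker = b := by
        intro χ hχ
        have h1 := hker χ hχ
        have := hpb
        exact Nat.eq_of_mul_eq_mul_left hp.pos (by omega)
      have hNG : NGen.card ≤ (p ^ n - 1) * b ^ n := by
        calc NGen.card ≤ (S.biUnion (fun χ => Finset.univ.filter
              (fun h : Fin n → G => ∀ j, χ (h j) = 1))).card := Finset.card_le_card hcover
          _ ≤ ∑ χ ∈ S, (Finset.univ.filter
              (fun h : Fin n → G => ∀ j, χ (h j) = 1)).card := Finset.card_biUnion_le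
          _ = ∑ χ ∈ S, b ^ n := by
            apply Finset.sum_congr rfl
            intro χ hχ
            rw [hkerset χ, hbsame χ hχ]
          _ = S.card * b ^ n := by rw [Finset.sum_const, smul_eq_mul]
          _ ≤ (p ^ n - 1) * b ^ n := Nat.mul_le_mul_right _ hScard
      have hcn : c ^ n = p ^ n * b ^ n := by rw [← hpb, mul_pow]
      have hP1 : 1 ≤ p ^ n := Nat.one_le_pow _ _ hp.pos
      have hsplit : p ^ n * b ^ n = (p ^ n - 1) * b ^ n + b ^ n := by
        have h' : p ^ n = (p ^ n - 1) + 1 := by omega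
        conv_lhs => rw [h']
        rw [Nat.add_mul, one_mul]
      have hTb : b ^ n ≤ T.card := by omega
      calc c ^ n = p ^ n * b ^ n := hcn
        _ ≤ p ^ n * T.card := Nat.mul_le_mul_left _ hTb
  -- convert to the real inequality
  have hTcard : Nat.card {h : Fin n → G // FreeGroup.lift h w = 1} = T.card := by
    rw [Nat.card_eq_fintype_card, Fintype.card_subtype]
  rw [wordProb, hTcard, Nat.card_eq_fintype_card (α := G), ← hc]
  rw [div_le_div_iff₀ (pow_pos (by exact_mod_cast hp.pos) n)
    (pow_pos (by exact_mod_cast hcpos) n)]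
  have : ((c : ℝ)) ^ n ≤ (T.card : ℝ) * (p : ℝ) ^ n := by
    calc ((c : ℝ)) ^ n = ((c ^ n : ℕ) : ℝ) := by push_cast; ring
      _ ≤ ((p ^ n * T.card : ℕ) : ℝ) := by exact_mod_cast hkey
      _ = (T.card : ℝ) * (p : ℝ) ^ n := by push_cast; ring
  linarith

/-- Assuming a positive answer to Problem 2 (for every nontrivial `w ∈ F_n`, every `d`
and every `ε > 0` there is a nontrivial word `v` which is an identity of every finite
`d`-generated group `G` with `P_G(w) ≥ ε`), for `n ≥ 2`, a prime `p`, and a family `X`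
of `n`-generated finite `p`-groups, the free group `F_n` is residually `X` if and only
if the groups in `X` do not satisfy a common nontrivial identity. -/
theorem residually_X_iff_no_common_identity
    (hProblem2 : ∀ (n : ℕ) (w : FreeGroup (Fin n)), w ≠ 1 → ∀ d : ℕ, 0 < d →
      ∀ ε : ℝ, 0 < ε →
        ∃ (m : ℕ) (v : FreeGroup (Fin m)), v ≠ 1 ∧
          ∀ (G : Type) [Group G] [Finite G],
            (∃ g : Fin d → G, Subgroup.closure (Set.range g) = ⊤) →
            ε ≤ wordProb G w →
            ∀ h : Fin m → G, FreeGroup.lift h v = 1)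
    (n : ℕ) (hn : 2 ≤ n) (p : ℕ) (hp : p.Prime)
    (ι : Type) (G : ι → Type) [∀ i, Group (G i)] [∀ i, Finite (G i)]
    (hpG : ∀ i, IsPGroup p (G i))
    (hgen : ∀ i, ∃ g : Fin n → G i, Subgroup.closure (Set.range g) = ⊤) :
    (∀ w : FreeGroup (Fin n), w ≠ 1 →
      ∃ (i : ι) (φ : FreeGroup (Fin n) →* G i), Function.Surjective φ ∧ φ w ≠ 1) ↔
    ¬ ∃ (m : ℕ) (v : FreeGroup (Fin m)), v ≠ 1 ∧
        ∀ (i : ι) (h : Fin m → G i), FreeGroup.lift h v = 1 := by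
  constructor
  · -- residually X implies no common identity
    rintro hres ⟨m, v, hv, hid⟩
    obtain ⟨u, hu⟩ := exists_freeGroup_eval_ne_one hn v hv
    obtain ⟨i, φ, hφs, hφw⟩ := hres (FreeGroup.lift u v) hu
    apply hφw
    have hcomp : φ.comp (FreeGroup.lift u) = FreeGroup.lift (fun j => φ (u j)) := by
      apply FreeGroup.ext_hom
      intro a
      simp
    have : φ (FreeGroup.lift u v) = FreeGroup.lift (fun j => φ (u j)) v := by
      rw [← hcomp]; rfl
    rw [this]
    exact hid i _
  · -- no common identity implies residually X
    intro hno w hw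
    by_contra hcon
    push_neg at hcon
    have hbound : ∀ i, (1 : ℝ) / (p : ℝ) ^ n ≤ wordProb (G i) w := by
      intro i
      apply wordProb_ge hp (hpG i) (hgen i) w
      intro h hh
      have hsurj : Function.Surjective (FreeGroup.lift h) := by
        rw [← MonoidHom.range_eq_top, FreeGroup.range_lift_eq_closure, hh]
      exact hcon i (FreeGroup.lift h) hsurj
    have hεpos : (0 : ℝ) < 1 / (p : ℝ) ^ n :=
      div_pos one_pos (pow_pos (by exact_mod_cast hp.pos) n)
    obtain ⟨m, v, hv, hvid⟩ := hProblem2 n w hw n (by omega) (1 / (p : ℝ) ^ n) hεpos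
    exact hno ⟨m, v, hv, fun i h => hvid (G i) (hgen i) (hbound i) h⟩
end
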